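/- arXiv:math/0508272 — 4 statements merged into one kernel-verified Lean document; each statement's English description precedes it below -/
import Mathlib

section
/- Let S ⊆ λ and let 𝔠 be an S-closed C-extending sequence. For α, β ∈ C with α < β and w ⊆ α such that w ∪ {min(C \ sup(w))} is S-closed: if u ∈ pos_S(w, 𝔠, α) and v ∈ pos_S(u, 𝔠, β), then v ∈ pos_S(w, 𝔠, β). -/
open Set

noncomputable section

universe u

/-- `c` is an `(α,β)`-extending function: it maps subsets of `α` (coded as subsets of
`Set.Iio α`) to subsets of `β` that are not subsets of `α`, with `c u ∩ α = u`. -/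
def ExtFun (α β : Ordinal.{u}) (c : Set Ordinal.{u} → Set Ordinal.{u}) : Prop :=
  ∀ u, u ⊆ Set.Iio α → c u ⊆ Set.Iio β ∧ ¬ c u ⊆ Set.Iio α ∧ c u ∩ Set.Iio α = u

/-- The next element of `C` above `α`. -/
def nextC (C : Set Ordinal.{u}) (α : Ordinal.{u}) : Ordinal.{u} := sInf (C ∩ Set.Ioi α)

/-- The least element of `C` above all elements of `w`. -/
def firstAbove (C : Set Ordinal.{u}) (w : Set Ordinal.{u}) : Ordinal.{u} :=
  sInf {α ∈ C | w ⊆ Set.Iio α}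

/-- The least element of `C` which is `≥ sup w`. -/
def minAboveSup (C : Set Ordinal.{u}) (w : Set Ordinal.{u}) : Ordinal.{u} :=
  sInf (C \ Set.Iio (sSup w))

/-- `C` is an unbounded subset of (the ordinals below) `lam`. -/
def UnbIn (lam : Ordinal.{u}) (C : Set Ordinal.{u}) : Prop :=
  C ⊆ Set.Iio lam ∧ ∀ α < lam, ∃ β ∈ C, α < β

/-- `C` is a club (closed and unbounded) subset of `lam`. -/
def IsClubIn (lam : Ordinal.{u}) (C : Set Ordinal.{u}) : Prop :=
  UnbIn lam C ∧
    ∀ ξ < lam, (C ∩ Set.Iio ξ).Nonempty → ξ = sSup (C ∩ Set.Iio ξ) → ξ ∈ C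

/-- `S` is a stationary subset of `lam`. -/
def StatIn (lam : Ordinal.{u}) (S : Set Ordinal.{u}) : Prop :=
  S ⊆ Set.Iio lam ∧ ∀ C, IsClubIn lam C → (S ∩ C).Nonempty

/-- `𝔠 = ⟨c α : α ∈ C⟩` is a `C`-extending sequence. -/
def CextSeq (lam : Ordinal.{u}) (C : Set Ordinal.{u})
    (c : Ordinal.{u} → Set Ordinal.{u} → Set Ordinal.{u}) : Prop :=
  UnbIn lam C ∧ ∀ α ∈ C, ExtFun α (nextC C α) (c α)

/-- `pos⁺(w, 𝔠, β)`. -/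
def posPlus (C : Set Ordinal.{u}) (c : Ordinal.{u} → Set Ordinal.{u} → Set Ordinal.{u})
    (w : Set Ordinal.{u}) (β : Ordinal.{u}) : Set (Set Ordinal.{u}) :=
  {u | u ⊆ Set.Iio β ∧
    u ∩ Set.Iio (firstAbove C w) = w ∧
    (∀ α₀ ∈ C, w ⊆ Set.Iio α₀ → (C ∩ Set.Ioi α₀).Nonempty → nextC C α₀ ≤ β →
      (c α₀ (u ∩ Set.Iio α₀) = u ∩ Set.Iio (nextC C α₀) ∨
        u ∩ Set.Iio α₀ = u ∩ Set.Iio (nextC C α₀))) ∧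
    (∀ α₀, sSup w < α₀ → α₀ ∉ C → (C ∩ Set.Iio α₀).Nonempty →
      α₀ = sSup (C ∩ Set.Iio α₀) → (C ∩ Set.Ioi α₀).Nonempty → nextC C α₀ ≤ β →
      u ∩ Set.Iio (nextC C α₀) = u ∩ Set.Iio α₀)}

/-- `pos(w, 𝔠, β)`. -/
def pos (C : Set Ordinal.{u}) (c : Ordinal.{u} → Set Ordinal.{u} → Set Ordinal.{u})
    (w : Set Ordinal.{u}) (β : Ordinal.{u}) : Set (Set Ordinal.{u}) :=
  {u ∈ posPlus C c w β |
    firstAbove C w ≤ β → nextC C (firstAbove C w) ≤ β →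
      u ∩ Set.Iio (nextC C (firstAbove C w)) = c (firstAbove C w) w}

/-- `w` is an `S`-closed set: limits of `w` lying in `S` belong to `w`. -/
def SClosed (S w : Set Ordinal.{u}) : Prop :=
  ∀ ξ, (w ∩ Set.Iio ξ).Nonempty → ξ = sSup (w ∩ Set.Iio ξ) → ξ ∈ S → ξ ∈ w

/-- `𝔠` is an `S`-closed `C`-extending sequence. -/
def SClosedSeq (lam : Ordinal.{u}) (S C : Set Ordinal.{u})
    (c : Ordinal.{u} → Set Ordinal.{u} → Set Ordinal.{u}) : Prop :=
  IsClubIn lam C ∧ CextSeq lam C c ∧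
  (∀ α ∈ C, ∀ u, u ⊆ Set.Iio α → α ∈ c α u) ∧
  (∀ ξ ∈ S, ξ ∉ C → ∀ α ∈ C ∩ Set.Iio ξ, ∀ u, u ⊆ Set.Iio α →
    ξ = sSup (c α u ∩ Set.Iio ξ) → ξ ∈ c α u)

/-- `pos⁺_S(w, 𝔠, β)`. -/
def posPlusS (S C : Set Ordinal.{u}) (c : Ordinal.{u} → Set Ordinal.{u} → Set Ordinal.{u})
    (w : Set Ordinal.{u}) (β : Ordinal.{u}) : Set (Set Ordinal.{u}) :=
  {u ∈ posPlus C c w β | SClosed S (u ∪ {β})}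

/-- `pos_S(w, 𝔠, β)`. -/
def posS (S C : Set Ordinal.{u}) (c : Ordinal.{u} → Set Ordinal.{u} → Set Ordinal.{u})
    (w : Set Ordinal.{u}) (β : Ordinal.{u}) : Set (Set Ordinal.{u}) :=
  {u ∈ pos C c w β | SClosed S (u ∪ {β})}

/-- A condition in the forcing notion `Q¹_S`: a triple `(w, C, 𝔠)` where `C` is a club of
`lam`, `w ⊆ min C` with `w ∪ {min C}` `S`-closed, and `𝔠` is an `S`-closed `C`-extending
sequence (normalized to be `∅` outside its natural domain). -/
structure Q1S (lam : Ordinal.{u}) (S : Set Ordinal.{u}) where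
  w : Set Ordinal.{u}
  C : Set Ordinal.{u}
  c : Ordinal.{u} → Set Ordinal.{u} → Set Ordinal.{u}
  seq : SClosedSeq lam S C c
  w_sub : w ⊆ Set.Iio (sInf C)
  w_cl : SClosed S (w ∪ {sInf C})
  norm : ∀ α u, (α ∉ C ∨ ¬ u ⊆ Set.Iio α) → c α u = ∅

/-- The order of `Q¹_S`. -/
def Q1Sle (lam : Ordinal.{u}) (S : Set Ordinal.{u}) (p q : Q1S lam S) : Prop :=
  q.C ⊆ p.C ∧ q.w ∈ posPlusS S p.C p.c p.w (sInf q.C) ∧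
  ∀ α₀ ∈ q.C, (q.C ∩ Set.Ioi α₀).Nonempty →
    ∀ u ∈ posPlusS S q.C q.c q.w α₀,
      q.c α₀ u ∈ posS S p.C p.c u (nextC q.C α₀)

open scoped Classical in
/-- Restriction of an extending sequence to a smaller domain `C` (normalized). -/
def restC (C : Set Ordinal.{u}) (c : Ordinal.{u} → Set Ordinal.{u} → Set Ordinal.{u}) :
    Ordinal.{u} → Set Ordinal.{u} → Set Ordinal.{u} :=
  fun α u => if α ∈ C ∧ u ⊆ Set.Iio α then c α u else ∅

/-- `q` is the condition `p↾_α u = (u, C^p \ α, 𝔠^p ↾ (C^p \ α))`. -/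
def IsRestrictedCond (lam : Ordinal.{u}) (S : Set Ordinal.{u}) (p : Q1S lam S)
    (α : Ordinal.{u}) (u : Set Ordinal.{u}) (q : Q1S lam S) : Prop :=
  q.w = u ∧ q.C = p.C ∩ Set.Ici α ∧ q.c = restC (p.C ∩ Set.Ici α) p.c

/-- The order type of a set of ordinals. -/
def otp (s : Set Ordinal.{u}) : Ordinal.{u + 1} := Ordinal.type (Subrel ((· < ·) : Ordinal.{u} → Ordinal.{u} → Prop) (· ∈ s))

open scoped Classical in
/-- The extending sequence of the natural limit of an increasing sequence
`⟨p ξ : ξ < γ⟩` of conditions in `Q¹_S`. -/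
def natLimitC (lam : Ordinal.{u}) (S : Set Ordinal.{u}) (γ : Ordinal.{u})
    (p : Ordinal.{u} → Q1S lam S) : Ordinal.{u} → Set Ordinal.{u} → Set Ordinal.{u} :=
  fun δ u =>
    if δ ∈ ⋂ ξ ∈ Set.Iio γ, (p ξ).C then
      if u ⊆ Set.Iio δ then
        if ∀ ξ < γ, u ∈ posPlusS S (p ξ).C (p ξ).c (p ξ).w δ then
          ⋃ ξ ∈ Set.Iio γ, (p ξ).c δ u
        else u ∪ {δ}
      else ∅
    else ∅

/-- `G` is a filter on the forcing notion `Q¹_S`. -/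
def QFilter (lam : Ordinal.{u}) (S : Set Ordinal.{u}) (G : Set (Q1S lam S)) : Prop :=
  G.Nonempty ∧ (∀ p ∈ G, ∀ q, Q1Sle lam S q p → q ∈ G) ∧
    ∀ p ∈ G, ∀ q ∈ G, ∃ r ∈ G, Q1Sle lam S p r ∧ Q1Sle lam S q r

/-- `G` is a generic filter on `Q¹_S`: a filter meeting every dense set. -/
def QGeneric (lam : Ordinal.{u}) (S : Set Ordinal.{u}) (G : Set (Q1S lam S)) : Prop :=
  QFilter lam S G ∧ ∀ D : Set (Q1S lam S),
    (∀ p, ∃ q ∈ D, Q1Sle lam S p q) → (D ∩ G).Nonempty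

section Game
variable {Q : Type*}

/-- `f` codes a legal partial play of `⅁₀^λ(Q, r)` of length `i` in which Complete
follows the strategy `σ`. -/
def IsPartialPlay (le : Q → Q → Prop) (r : Q)
    (σ : (Ordinal.{u} → Q × Q) → Ordinal.{u} → Q → Q) (i : Ordinal.{u})
    (f : Ordinal.{u} → Q × Q) : Prop :=
  ∀ j < i, le r (f j).1 ∧ (∀ k < j, le (f k).2 (f j).1) ∧
    le (f j).1 (f j).2 ∧ (f j).2 = σ f j (f j).1

/-- `σ` is a winning strategy for Complete in `⅁₀^λ(Q, r)`: it depends only on the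
history, Incomplete always has a legal move, and `σ` answers any legal move legally. -/
def WinningStrat (le : Q → Q → Prop) (lam : Ordinal.{u}) (r : Q)
    (σ : (Ordinal.{u} → Q × Q) → Ordinal.{u} → Q → Q) : Prop :=
  (∀ f g i p, (∀ j < i, f j = g j) → σ f i p = σ g i p) ∧
  ∀ i < lam, ∀ f, IsPartialPlay le r σ i f →
    (∃ p, le r p ∧ ∀ j < i, le (f j).2 p) ∧
    (∀ p, le r p → (∀ j < i, le (f j).2 p) → le p (σ f i p))

/-- `Q` is strategically `(<λ)`-complete. -/
def StratComplete (Q : Type*) (le : Q → Q → Prop) (lam : Ordinal.{u}) : Prop :=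
  ∀ r : Q, ∃ σ, WinningStrat le lam r σ

end Game

/-- A family `Fam ⊆ β^β` is `F`-dominating. -/
def Dominating {β : Type*} [LT β] (F : Set (Set β)) (Fam : Set (β → β)) : Prop :=
  ∀ g : β → β, ∃ f ∈ Fam, {a | g a < f a} ∈ F

/-- The `F`-dominating number `𝔡_F`. -/
def domNum {β : Type*} [LT β] (F : Set (Set β)) : Cardinal :=
  sInf {c | ∃ Fam : Set (β → β), Dominating F Fam ∧ c = Cardinal.mk Fam}

/-- `U` is a (proper) filter on (the ordinals below) `lam`. -/
def FilterOn (lam : Ordinal.{u}) (U : Set (Set Ordinal.{u})) : Prop :=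
  (∀ A ∈ U, A ⊆ Set.Iio lam) ∧ Set.Iio lam ∈ U ∧ ∅ ∉ U ∧
  (∀ A ∈ U, ∀ B ∈ U, A ∩ B ∈ U) ∧
  (∀ A ∈ U, ∀ B, A ⊆ B → B ⊆ Set.Iio lam → B ∈ U)

/-- The diagonal intersection of a `lam`-sequence of sets. -/
def diagInter (lam : Ordinal.{u}) (A : Ordinal.{u} → Set Ordinal.{u}) : Set Ordinal.{u} :=
  {δ | δ < lam ∧ ∀ i < δ, δ ∈ A i}

/-- `U` is a normal filter on `lam`. -/
def NormalFilterOn (lam : Ordinal.{u}) (U : Set (Set Ordinal.{u})) : Prop :=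
  FilterOn lam U ∧
    ∀ A : Ordinal.{u} → Set Ordinal.{u}, (∀ i < lam, A i ∈ U) → diagInter lam A ∈ U

/-- A condition in the forcing notion `Q²_𝒰`. -/
structure Q2U (lam : Ordinal.{u}) (U : Set (Set Ordinal.{u})) where
  w : Set Ordinal.{u}
  C : Set Ordinal.{u}
  c : Ordinal.{u} → Set Ordinal.{u} → Set Ordinal.{u}
  C_mem : C ∈ U
  seq : CextSeq lam C c
  w_sub : w ⊆ Set.Iio (sInf C)
  norm : ∀ α u, (α ∉ C ∨ ¬ u ⊆ Set.Iio α) → c α u = ∅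

/-- The order of `Q²_𝒰`. -/
def Q2Ule (lam : Ordinal.{u}) (U : Set (Set Ordinal.{u})) (p q : Q2U lam U) : Prop :=
  q.C ⊆ p.C ∧ q.w ∈ posPlus p.C p.c p.w (sInf q.C) ∧
  ∀ α₀ ∈ q.C, (q.C ∩ Set.Ioi α₀).Nonempty →
    ∀ u ∈ posPlus q.C q.c q.w α₀,
      q.c α₀ u ∈ pos p.C p.c u (nextC q.C α₀)

/-- `q` is the condition `p↾_α u` in `Q²_𝒰`. -/
def IsRestrictedCond2 (lam : Ordinal.{u}) (U : Set (Set Ordinal.{u})) (p : Q2U lam U)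
    (α : Ordinal.{u}) (u : Set Ordinal.{u}) (q : Q2U lam U) : Prop :=
  q.w = u ∧ q.C = p.C ∩ Set.Ici α ∧ q.c = restC (p.C ∩ Set.Ici α) p.c

end

/-- transitivity of `pos_S` for `S`-closed extending sequences. -/
theorem posS_trans (κ : Cardinal.{0}) (hκ : κ.IsInaccessible) (S : Set Ordinal)
    (C : Set Ordinal) (c : Ordinal → Set Ordinal → Set Ordinal)
    (hc : SClosedSeq κ.ord S C c)
    (α β : Ordinal) (hα : α ∈ C) (hβ : β ∈ C) (hαβ : α < β)
    (w : Set Ordinal) (hw : w ⊆ Set.Iio α)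
    (hwcl : SClosed S (w ∪ {minAboveSup C w}))
    (u v : Set Ordinal) (hu : u ∈ posS S C c w α) (hv : v ∈ posS S C c u β) :
    v ∈ posS S C c w β := by
  obtain ⟨⟨⟨hu1, hu2, hu3, hu4⟩, huroot⟩, hucl⟩ := hu
  obtain ⟨⟨⟨hv1, hv2, hv3, hv4⟩, hvroot⟩, hvcl⟩ := hv
  set αw := firstAbove C w with hαw_def
  set αu := firstAbove C u with hαu_def
  have hne_u : ({γ ∈ C | u ⊆ Set.Iio γ}).Nonempty := ⟨α, hα, hu1⟩
  have hαu_mem : αu ∈ C ∧ u ⊆ Set.Iio αu := csInf_mem hne_u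
  have hαw_le : αw ≤ α := csInf_le' ⟨hα, hw⟩
  have hαu_le : αu ≤ α := csInf_le' ⟨hα, hu1⟩
  have hwu : w ⊆ u := hu2 ▸ Set.inter_subset_left
  have hαwαu : αw ≤ αu := le_csInf hne_u fun γ hγ => csInf_le' ⟨hγ.1, hwu.trans hγ.2⟩
  have hvres : ∀ γ, γ ≤ αu → v ∩ Set.Iio γ = u ∩ Set.Iio γ := by
    intro γ hγ
    rw [← hv2, Set.inter_assoc, Set.Iio_inter_Iio, min_eq_right hγ]
  refine ⟨⟨⟨hv1, ?_, ?_, ?_⟩, ?_⟩, hvcl⟩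
  · rw [hvres αw hαwαu]; exact hu2
  · intro α₀ hα₀C hwα₀ hne hnle
    rcases lt_or_ge α₀ αu with hlt | hge
    · have hnext_le : nextC C α₀ ≤ αu := csInf_le' ⟨hαu_mem.1, hlt⟩
      rw [hvres α₀ hlt.le, hvres _ hnext_le]
      exact hu3 α₀ hα₀C hwα₀ hne (hnext_le.trans hαu_le)
    · exact hv3 α₀ hα₀C (fun x hx => lt_of_lt_of_le (hαu_mem.2 hx) hge) hne hnle
  · intro α₀ hsup hnC hneb hlim hnea hnle
    rcases lt_or_ge α₀ αu with hlt | hge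
    · have hnext_le : nextC C α₀ ≤ αu := csInf_le' ⟨hαu_mem.1, hlt⟩
      rw [hvres α₀ hlt.le, hvres _ hnext_le]
      exact hu4 α₀ hsup hnC hneb hlim hnea (hnext_le.trans hαu_le)
    · have hsupu : sSup u < α₀ := by
        rcases hge.lt_or_eq with h | h
        · exact lt_of_le_of_lt (csSup_le' fun x hx => (hαu_mem.2 hx).le) h
        · exact absurd (h ▸ hαu_mem.1) hnC
      exact hv4 α₀ hsupu hnC hneb hlim hnea hnle
  · intro h1 h2
    rw [← hαw_def] at h1 h2 ⊢
    rcases hαwαu.lt_or_eq with hlt | heq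
    · have hnext_le : nextC C αw ≤ αu := csInf_le' ⟨hαu_mem.1, hlt⟩
      rw [hvres _ hnext_le]
      exact huroot hαw_le (hnext_le.trans hαu_le)
    · have huw : u = w := by
        rw [← hu2, heq, Set.inter_eq_self_of_subset_left hαu_mem.2]
      rw [heq, ← huw]
      exact hvroot (hαu_le.trans hαβ.le) (by rwa [← heq])
end

section
/- Let 𝔠 be an S-closed C-extending sequence, β ∈ C, w ⊆ β with w ∪ {min(C \ sup(w))} S-closed. Then pos_S(w, 𝔠, β) is nonempty and pos_S(w, 𝔠, β) ⊆ pos⁺_S(w, 𝔠, β). -/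
open Set

noncomputable def buildF (C : Set Ordinal) (c : Ordinal → Set Ordinal → Set Ordinal)
    (w : Set Ordinal) (α₁ : Ordinal) (δ : Ordinal) : Set Ordinal :=
  w ∪ ⋃ γ, ⋃ (h : γ ∈ C ∧ α₁ ≤ γ ∧ γ < δ), c γ (buildF C c w α₁ γ)
termination_by δ
decreasing_by exact h.2.2

theorem buildF_mem {C : Set Ordinal} {c : Ordinal → Set Ordinal → Set Ordinal}
    {w : Set Ordinal} {α₁ δ x : Ordinal} :
    x ∈ buildF C c w α₁ δ ↔
      x ∈ w ∨ ∃ γ, (γ ∈ C ∧ α₁ ≤ γ ∧ γ < δ) ∧ x ∈ c γ (buildF C c w α₁ γ) := by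
  conv_lhs => rw [buildF]
  simp [Set.mem_union, Set.mem_iUnion]

/-- `pos_S(w, 𝔠, β)` is nonempty and contained in `pos⁺_S(w, 𝔠, β)`. -/
theorem posS_nonempty_subset_posPlusS (κ : Cardinal.{0}) (hκ : κ.IsInaccessible)
    (S : Set Ordinal)
    (C : Set Ordinal) (c : Ordinal → Set Ordinal → Set Ordinal)
    (hc : SClosedSeq κ.ord S C c)
    (β : Ordinal) (hβ : β ∈ C)
    (w : Set Ordinal) (hw : w ⊆ Set.Iio β)
    (hwcl : SClosed S (w ∪ {minAboveSup C w})) :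
    (posS S C c w β).Nonempty ∧ posS S C c w β ⊆ posPlusS S C c w β := by
  classical
  obtain ⟨hclub, ⟨hunbC, hext⟩, hdiag, hScl⟩ := hc
  have hCIio : C ⊆ Set.Iio κ.ord := hclub.1.1
  have hβlam : β < κ.ord := hCIio hβ
  have hα₁mem : firstAbove C w ∈ {α ∈ C | w ⊆ Set.Iio α} := csInf_mem ⟨β, hβ, hw⟩
  set α₁ := firstAbove C w with hα₁def
  have hα₁C : α₁ ∈ C := hα₁mem.1
  have hwα₁ : w ⊆ Set.Iio α₁ := hα₁mem.2
  have hα₁β : α₁ ≤ β := csInf_le' ⟨hβ, hw⟩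
  set g : Ordinal → Set Ordinal := buildF C c w α₁ with hgdef
  have gmem : ∀ δ x, x ∈ g δ ↔
      x ∈ w ∨ ∃ γ, (γ ∈ C ∧ α₁ ≤ γ ∧ γ < δ) ∧ x ∈ c γ (g γ) := fun δ x => buildF_mem
  have hwg : ∀ δ, w ⊆ g δ := fun δ x hx => (gmem δ x).2 (Or.inl hx)
  have hnextC : ∀ α₀, (C ∩ Set.Ioi α₀).Nonempty → nextC C α₀ ∈ C ∧ α₀ < nextC C α₀ := by
    intro α₀ hne
    have h := csInf_mem hne
    exact ⟨h.1, h.2⟩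
  have L1 : ∀ α, α ∈ C → α₁ ≤ α → g α ⊆ Set.Iio α := by
    intro α
    induction α using Ordinal.induction with
    | h α ih =>
      intro hαC hα₁α x hx
      rcases (gmem α x).1 hx with hxw | ⟨γ, ⟨hγC, hα₁γ, hγα⟩, hxc⟩
      · exact lt_of_lt_of_le (hwα₁ hxw) hα₁α
      · have hgγ := ih γ hγα hγC hα₁γ
        have hcx : x < nextC C γ := (hext γ hγC (g γ) hgγ).1 hxc
        have hle : nextC C γ ≤ α := csInf_le' ⟨hαC, hγα⟩
        exact lt_of_lt_of_le hcx hle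
  have hsub_c : ∀ γ, γ ∈ C → α₁ ≤ γ → g γ ⊆ c γ (g γ) := by
    intro γ hγC hα₁γ x hx
    have h := (hext γ hγC (g γ) (L1 γ hγC hα₁γ)).2.2
    rw [← h] at hx
    exact hx.1
  have L2 : ∀ α', ∀ α, α ∈ C → α₁ ≤ α → α ≤ α' → g α' ∩ Set.Iio α = g α := by
    intro α'
    induction α' using Ordinal.induction with
    | h α' ih =>
      intro α hαC hα₁α hαα'
      apply Set.Subset.antisymm
      · rintro x ⟨hxg, hxα⟩
        rcases (gmem α' x).1 hxg with hxw | ⟨γ, ⟨hγC, hα₁γ, hγα'⟩, hxc⟩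
        · exact hwg α hxw
        · rcases lt_or_ge γ α with h | h
          · exact (gmem α x).2 (Or.inr ⟨γ, ⟨hγC, hα₁γ, h⟩, hxc⟩)
          · have hgγ : x ∈ g γ := by
              have heq := (hext γ hγC (g γ) (L1 γ hγC hα₁γ)).2.2
              rw [← heq]
              exact ⟨hxc, lt_of_lt_of_le hxα h⟩
            have := ih γ hγα' α hαC hα₁α h
            rw [← this]
            exact ⟨hgγ, hxα⟩
      · intro x hx
        refine ⟨?_, L1 α hαC hα₁α hx⟩
        rcases (gmem α x).1 hx with hxw | ⟨γ, ⟨hγC, hα₁γ, hγα⟩, hxc⟩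
        · exact hwg α' hxw
        · exact (gmem α' x).2 (Or.inr ⟨γ, ⟨hγC, hα₁γ, lt_of_lt_of_le hγα hαα'⟩, hxc⟩)
  have L3 : ∀ α, α ∈ C → α₁ ≤ α → (C ∩ Set.Ioi α).Nonempty →
      g (nextC C α) = c α (g α) := by
    intro α hαC hα₁α hne
    obtain ⟨hνC, hαν⟩ := hnextC α hne
    apply Set.Subset.antisymm
    · intro x hx
      rcases (gmem _ x).1 hx with hxw | ⟨γ, ⟨hγC, hα₁γ, hγν⟩, hxc⟩
      · exact hsub_c α hαC hα₁α (hwg α hxw)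
      · rcases lt_trichotomy γ α with h | h | h
        · exact hsub_c α hαC hα₁α ((gmem α x).2 (Or.inr ⟨γ, ⟨hγC, hα₁γ, h⟩, hxc⟩))
        · rw [← h]; exact hxc
        · exact absurd (csInf_le' ⟨hγC, h⟩ : nextC C α ≤ γ) (not_le.2 hγν)
    · intro x hx
      exact (gmem _ x).2 (Or.inr ⟨α, ⟨hαC, hα₁α, hαν⟩, hx⟩)
  have hgα₁ : g α₁ = w := by
    apply Set.Subset.antisymm
    · intro x hx
      rcases (gmem α₁ x).1 hx with hxw | ⟨γ, ⟨_, h1, h2⟩, _⟩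
      · exact hxw
      · exact absurd (lt_of_le_of_lt h1 h2) (lt_irrefl α₁)
    · exact hwg α₁
  have hwbdd : BddAbove w := ⟨β, fun a ha => (hw ha).le⟩
  have hCmem : ∀ ζ, ζ ∈ C → α₁ ≤ ζ → ζ < β → ζ ∈ g β := fun ζ hζC hα₁ζ hζβ =>
    (gmem β ζ).2 (Or.inr ⟨ζ, ⟨hζC, hα₁ζ, hζβ⟩, hdiag ζ hζC (g ζ) (L1 ζ hζC hα₁ζ)⟩)
  have h1 : g β ⊆ Set.Iio β := L1 β hβ hα₁β
  have h2 : g β ∩ Set.Iio α₁ = w := (L2 β α₁ hα₁C le_rfl hα₁β).trans hgα₁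
  -- third clause of posPlus
  have h3 : ∀ α₀ ∈ C, w ⊆ Set.Iio α₀ → (C ∩ Set.Ioi α₀).Nonempty → nextC C α₀ ≤ β →
      (c α₀ (g β ∩ Set.Iio α₀) = g β ∩ Set.Iio (nextC C α₀) ∨
        g β ∩ Set.Iio α₀ = g β ∩ Set.Iio (nextC C α₀)) := by
    intro α₀ hα₀C hwα₀ hne hνβ
    have hα₁α₀ : α₁ ≤ α₀ := csInf_le' ⟨hα₀C, hwα₀⟩
    obtain ⟨hνC, hα₀ν⟩ := hnextC α₀ hne
    left
    rw [L2 β α₀ hα₀C hα₁α₀ (lt_of_lt_of_le hα₀ν hνβ).le,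
      L2 β (nextC C α₀) hνC (hα₁α₀.trans hα₀ν.le) hνβ, L3 α₀ hα₀C hα₁α₀ hne]
  -- fourth clause of posPlus
  have h4 : ∀ α₀, sSup w < α₀ → α₀ ∉ C → (C ∩ Set.Iio α₀).Nonempty →
      α₀ = sSup (C ∩ Set.Iio α₀) → (C ∩ Set.Ioi α₀).Nonempty → nextC C α₀ ≤ β →
      g β ∩ Set.Iio (nextC C α₀) = g β ∩ Set.Iio α₀ := by
    intro α₀ hsupw hα₀C hne1 heq hne2 hνβ
    obtain ⟨hνC, hα₀ν⟩ := hnextC α₀ hne2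
    have hwα₀ : w ⊆ Set.Iio α₀ := fun a ha => lt_of_le_of_lt (le_csSup hwbdd ha) hsupw
    have hα₁ν : α₁ ≤ nextC C α₀ :=
      csInf_le' ⟨hνC, fun a ha => lt_trans (hwα₀ ha) hα₀ν⟩
    have key : g (nextC C α₀) ⊆ Set.Iio α₀ := by
      intro x hx
      rcases (gmem _ x).1 hx with hxw | ⟨γ, ⟨hγC, hα₁γ, hγν⟩, hxc⟩
      · exact hwα₀ hxw
      · have hγα₀ : γ < α₀ := by
          rcases lt_trichotomy γ α₀ with h | h | h
          · exact h
          · exact absurd (h ▸ hγC) hα₀C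
          · exact absurd (csInf_le' ⟨hγC, h⟩ : nextC C α₀ ≤ γ) (not_le.2 hγν)
        obtain ⟨δ, hδ, hγδ⟩ := exists_lt_of_lt_csSup hne1 (heq ▸ hγα₀)
        have hnγ : nextC C γ ≤ δ := csInf_le' ⟨hδ.1, hγδ⟩
        exact lt_of_lt_of_le ((hext γ hγC (g γ) (L1 γ hγC hα₁γ)).1 hxc)
          (hnγ.trans hδ.2.le)
    have e1 : g β ∩ Set.Iio (nextC C α₀) = g (nextC C α₀) := L2 β (nextC C α₀) hνC hα₁ν hνβ
    ext x
    constructor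
    · rintro ⟨hxu, hxν⟩
      have hxg : x ∈ g (nextC C α₀) := by rw [← e1]; exact ⟨hxu, hxν⟩
      exact ⟨hxu, key hxg⟩
    · rintro ⟨hxu, hxα⟩
      exact ⟨hxu, lt_trans hxα hα₀ν⟩
  -- the extra pos clause
  have hextra : firstAbove C w ≤ β → nextC C (firstAbove C w) ≤ β →
      g β ∩ Set.Iio (nextC C (firstAbove C w)) = c (firstAbove C w) w := by
    intro _ hnν
    have hne : (C ∩ Set.Ioi α₁).Nonempty := by
      obtain ⟨γ, hγC, hγ⟩ := hclub.1.2 α₁ (lt_of_le_of_lt hα₁β hβlam)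
      exact ⟨γ, hγC, hγ⟩
    obtain ⟨hνC, hαν⟩ := hnextC α₁ hne
    rw [← hα₁def] at hnν ⊢
    rw [L2 β (nextC C α₁) hνC hαν.le hnν, L3 α₁ hα₁C le_rfl hne, hgα₁]
  -- S-closedness of g β ∪ {β}
  have hclosed : SClosed S (g β ∪ {β}) := by
    intro ξ hne hsup hξS
    have hble : ∀ x ∈ (g β ∪ {β}) ∩ Set.Iio ξ, x ≤ β := by
      rintro x ⟨hx, _⟩
      rcases hx with hx | hx
      · exact (h1 hx).le
      · exact le_of_eq hx
    have hξβle : ξ ≤ β := le_of_eq_of_le hsup (csSup_le hne hble)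
    rcases eq_or_lt_of_le hξβle with h | hξβ
    · exact Or.inr (by simpa using h)
    have hinter : (g β ∪ {β}) ∩ Set.Iio ξ = g β ∩ Set.Iio ξ := by
      ext x
      constructor
      · rintro ⟨hx | hx, hxξ⟩
        · exact ⟨hx, hxξ⟩
        · have : (β : Ordinal) < ξ := by
            have hxb : x = β := hx
            rw [← hxb]; exact hxξ
          exact absurd this (not_lt.2 hξβ.le)
      · rintro ⟨hx, hxξ⟩
        exact ⟨Or.inl hx, hxξ⟩
    rw [hinter] at hne hsup
    refine Or.inl ?_
    rcases le_or_gt ξ α₁ with hξα₁ | hα₁ξ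
    · -- below α₁ : use S-closedness of w ∪ {minAboveSup C w}
      have hwint : g β ∩ Set.Iio ξ = w ∩ Set.Iio ξ := by
        ext x
        constructor
        · rintro ⟨hx, hxξ⟩
          have hm : x ∈ g β ∩ Set.Iio α₁ := ⟨hx, lt_of_lt_of_le hxξ hξα₁⟩
          rw [h2] at hm
          exact ⟨hm, hxξ⟩
        · rintro ⟨hx, hxξ⟩
          exact ⟨hwg β hx, hxξ⟩
      rw [hwint] at hne hsup
      have hsupwβ : sSup w ≤ β := csSup_le' (fun a ha => (hw ha).le)
      have hmmem : minAboveSup C w ∈ C \ Set.Iio (sSup w) :=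
        csInf_mem ⟨β, hβ, not_lt.2 hsupwβ⟩
      have hnem : ((w ∪ {minAboveSup C w}) ∩ Set.Iio ξ).Nonempty :=
        hne.mono (fun a ha => ⟨Or.inl ha.1, ha.2⟩)
      have hsupm : ξ = sSup ((w ∪ {minAboveSup C w}) ∩ Set.Iio ξ) := by
        apply le_antisymm
        · refine hsup.le.trans (csSup_le_csSup ?_ hne (fun a ha => ⟨Or.inl ha.1, ha.2⟩))
          exact ⟨ξ, fun a ha => ha.2.le⟩
        · exact csSup_le' (fun a ha => ha.2.le)
      rcases hwcl ξ hnem hsupm hξS with hξw | hξm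
      · exact hwg β hξw
      · by_cases hξw : ξ ∈ w
        · exact hwg β hξw
        · have hξm' : ξ = minAboveSup C w := hξm
          have hsm : sSup w ≤ ξ := by rw [hξm']; exact not_lt.1 hmmem.2
          have hwξ : w ⊆ Set.Iio ξ := fun a ha =>
            lt_of_le_of_ne (le_trans (le_csSup hwbdd ha) hsm) (fun h => hξw (h ▸ ha))
          have hξC : ξ ∈ C := by rw [hξm']; exact hmmem.1
          have hα₁ξ : α₁ ≤ ξ := csInf_le' ⟨hξC, hwξ⟩
          exact hCmem ξ hξC hα₁ξ hξβ
    · by_cases hξC : ξ ∈ C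
      · exact hCmem ξ hξC hα₁ξ.le hξβ
      · have hCξne : (C ∩ Set.Iio ξ).Nonempty := ⟨α₁, hα₁C, hα₁ξ⟩
        set μ := sSup (C ∩ Set.Iio ξ) with hμ
        have hμξ : μ ≤ ξ := csSup_le' (fun a ha => ha.2.le)
        have hμlt : μ < ξ := lt_of_le_of_ne hμξ
          (fun h => hξC (hclub.2 ξ (lt_trans hξβ hβlam) hCξne h.symm))
        have hμC : μ ∈ C := by
          by_contra hμnC
          have hCeq : C ∩ Set.Iio ξ = C ∩ Set.Iio μ := by
            ext a
            constructor
            · rintro ⟨haC, haξ⟩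
              have hbdd : BddAbove (C ∩ Set.Iio ξ) := ⟨ξ, fun b hb => hb.2.le⟩
              have hle : a ≤ μ := le_csSup hbdd ⟨haC, haξ⟩
              refine ⟨haC, lt_of_le_of_ne hle ?_⟩
              rintro rfl
              exact hμnC haC
            · rintro ⟨haC, haμ⟩
              exact ⟨haC, lt_trans haμ hμlt⟩
          exact hμnC (hclub.2 μ (lt_trans (lt_trans hμlt hξβ) hβlam)
            (hCeq ▸ hCξne) (by rw [← hCeq]))
        have hbddμ : BddAbove (C ∩ Set.Iio ξ) := ⟨ξ, fun b hb => hb.2.le⟩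
        have hα₁μ : α₁ ≤ μ := le_csSup hbddμ ⟨hα₁C, hα₁ξ⟩
        have hμβ : μ < β := lt_trans hμlt hξβ
        have hne2 : (C ∩ Set.Ioi μ).Nonempty := ⟨β, hβ, hμβ⟩
        obtain ⟨hνC, hμν⟩ := hnextC μ hne2
        have hνβ : nextC C μ ≤ β := csInf_le' ⟨hβ, hμβ⟩
        have hξν : ξ < nextC C μ := by
          rcases lt_trichotomy ξ (nextC C μ) with h | h | h
          · exact h
          · exact absurd (h ▸ hνC) hξC
          · exact absurd (le_csSup hbddμ ⟨hνC, h⟩ : nextC C μ ≤ μ) (not_le.2 hμν)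
        have e1 : g β ∩ Set.Iio (nextC C μ) = c μ (g μ) := by
          rw [L2 β (nextC C μ) hνC (hα₁μ.trans hμν.le) hνβ, L3 μ hμC hα₁μ hne2]
        have e2 : c μ (g μ) ∩ Set.Iio ξ = g β ∩ Set.Iio ξ := by
          rw [← e1]
          ext x
          constructor
          · rintro ⟨⟨hx, _⟩, hxξ⟩
            exact ⟨hx, hxξ⟩
          · rintro ⟨hx, hxξ⟩
            exact ⟨⟨hx, lt_trans hxξ hξν⟩, hxξ⟩
        have hξc : ξ ∈ c μ (g μ) :=
          hScl ξ hξS hξC μ ⟨hμC, hμlt⟩ (g μ) (L1 μ hμC hα₁μ) (by rw [e2]; exact hsup)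
        have hfin : ξ ∈ g β ∩ Set.Iio (nextC C μ) := by rw [e1]; exact hξc
        exact hfin.1
  constructor
  · exact ⟨g β, ⟨⟨h1, h2, h3, h4⟩, hextra⟩, hclosed⟩
  · intro u hu
    exact ⟨hu.1.1, hu.2⟩
end

section
/- The forcing notion Q¹_S is (<λ)-complete: every ≤-increasing sequence of conditions of length a limit ordinal γ < λ has an upper bound in Q¹_S. -/
open Set

/-! ### Auxiliary lemmas for Statement 8 -/

namespace Q1SAux
open Set

/-- Any subset of `Iio lam` is bounded above. -/
lemma bddAbove_of_subset_Iio {lam : Ordinal} {s : Set Ordinal} (h : s ⊆ Set.Iio lam) :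
    BddAbove s := ⟨lam, fun _ hx => (h hx).le⟩

lemma sSup_le_of_subset_Iic {s : Set Ordinal} {a : Ordinal} (h : s ⊆ Set.Iic a) :
    sSup s ≤ a := by
  rcases s.eq_empty_or_nonempty with rfl | hne
  · rw [csSup_empty]; exact bot_le
  · exact csSup_le hne h

lemma unb_nonempty {lam : Ordinal} {C : Set Ordinal} (h : UnbIn lam C) (hlam : 0 < lam) :
    C.Nonempty := by
  obtain ⟨β, hβ, -⟩ := h.2 0 hlam; exact ⟨β, hβ⟩

lemma nextC_mem {lam : Ordinal} {C : Set Ordinal} {x : Ordinal} (h : UnbIn lam C)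
    (hx : x < lam) : nextC C x ∈ C ∩ Set.Ioi x := by
  apply csInf_mem
  obtain ⟨β, hβ, hxβ⟩ := h.2 x hx
  exact ⟨β, hβ, hxβ⟩

lemma lt_nextC {lam : Ordinal} {C : Set Ordinal} {x : Ordinal} (h : UnbIn lam C)
    (hx : x < lam) : x < nextC C x := (nextC_mem h hx).2

lemma nextC_lt_lam {lam : Ordinal} {C : Set Ordinal} {x : Ordinal} (h : UnbIn lam C)
    (hx : x < lam) : nextC C x < lam := h.1 (nextC_mem h hx).1

lemma nextC_le {C : Set Ordinal} {x y : Ordinal} (hy : y ∈ C) (hxy : x < y) :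
    nextC C x ≤ y := csInf_le (OrderBot.bddBelow _) ⟨hy, hxy⟩

lemma nextC_mono {C C' : Set Ordinal} {x : Ordinal} (hsub : C' ⊆ C)
    (hne : (C' ∩ Set.Ioi x).Nonempty) : nextC C x ≤ nextC C' x :=
  csInf_le_csInf (OrderBot.bddBelow _) hne (fun y hy => ⟨hsub hy.1, hy.2⟩)

lemma club_sInf_mem {lam : Ordinal} {C : Set Ordinal} (h : IsClubIn lam C) (hlam : 0 < lam) :
    sInf C ∈ C := csInf_mem (unb_nonempty h.1 hlam)

lemma club_mem_of_cofinal {lam : Ordinal} {C : Set Ordinal} {ξ : Ordinal} (hC : IsClubIn lam C)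
    (hξ : ξ < lam) (hpos : 0 < ξ) (h : ∀ y < ξ, ∃ z ∈ C, y < z ∧ z < ξ) : ξ ∈ C := by
  obtain ⟨z, hz, -, hz2⟩ := h 0 hpos
  have hne : (C ∩ Set.Iio ξ).Nonempty := ⟨z, hz, hz2⟩
  refine hC.2 ξ hξ hne (le_antisymm ?_ (csSup_le hne (fun y hy => hy.2.le)))
  by_contra hlt
  push_neg at hlt
  obtain ⟨z, hzC, h1, h2⟩ := h _ hlt
  have hbdd : BddAbove (C ∩ Set.Iio ξ) :=
    bddAbove_of_subset_Iio (lam := lam) (fun x hx => lt_trans hx.2 hξ)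
  exact absurd (le_csSup hbdd ⟨hzC, h2⟩) (not_le.2 h1)

lemma restrict₂ {u v : Set Ordinal} {a b : Ordinal} (h : u ∩ Set.Iio b = v) (hab : a ≤ b) :
    u ∩ Set.Iio a = v ∩ Set.Iio a := by
  rw [← h, inter_assoc, Iio_inter_Iio, inf_eq_right.mpr hab]

/-- `firstAbove C w = sInf C` when `w ⊆ Iio (sInf C)`. -/
lemma firstAbove_eq_sInf {C w : Set Ordinal} (hC : C.Nonempty) (hw : w ⊆ Set.Iio (sInf C)) :
    firstAbove C w = sInf C := by
  unfold firstAbove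
  apply le_antisymm
  · exact csInf_le (OrderBot.bddBelow _) ⟨csInf_mem hC, hw⟩
  · apply le_csInf
    · exact ⟨sInf C, csInf_mem hC, hw⟩
    · exact fun b hb => csInf_le (OrderBot.bddBelow _) hb.1

end Q1SAux
namespace Q1SAux
open Set

section Seq

variable {lam : Ordinal} {S : Set Ordinal} {γ : Ordinal} {p : Ordinal → Q1S lam S}

/-- The club of the natural limit. -/
def limC (γ : Ordinal) (p : Ordinal → Q1S lam S) : Set Ordinal := ⋂ ξ ∈ Set.Iio γ, (p ξ).C

/-- The working part of the natural limit. -/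
def limW (γ : Ordinal) (p : Ordinal → Q1S lam S) : Set Ordinal := ⋃ ξ ∈ Set.Iio γ, (p ξ).w

lemma mem_limC {x : Ordinal} : x ∈ limC γ p ↔ ∀ ξ < γ, x ∈ (p ξ).C := by simp [limC]

lemma mem_limW {x : Ordinal} : x ∈ limW γ p ↔ ∃ ξ < γ, x ∈ (p ξ).w := by simp [limW]

lemma C_anti (hmono : ∀ ξ ζ, ξ < ζ → ζ < γ → Q1Sle lam S (p ξ) (p ζ)) {η ζ : Ordinal}
    (hle : η ≤ ζ) (hζ : ζ < γ) : (p ζ).C ⊆ (p η).C := by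
  rcases eq_or_lt_of_le hle with rfl | hlt
  · exact subset_rfl
  · exact (hmono η ζ hlt hζ).1

lemma limC_subset {ζ : Ordinal} (hζ : ζ < γ) : limC γ p ⊆ (p ζ).C :=
  fun _ hx => mem_limC.mp hx ζ hζ

lemma limC_Iio (hγ0 : 0 < γ) : limC γ p ⊆ Set.Iio lam :=
  (limC_subset hγ0).trans (p 0).seq.1.1.1

lemma sInf_C_mono (hmono : ∀ ξ ζ, ξ < ζ → ζ < γ → Q1Sle lam S (p ξ) (p ζ)) (hlam : 0 < lam)
    {η ζ : Ordinal} (hle : η ≤ ζ) (hζ : ζ < γ) : sInf (p η).C ≤ sInf (p ζ).C := by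
  apply le_csInf (unb_nonempty (p ζ).seq.1.1 hlam)
  exact fun b hb => csInf_le (OrderBot.bddBelow _) (C_anti hmono hle hζ hb)

lemma w_eq (hmono : ∀ ξ ζ, ξ < ζ → ζ < γ → Q1Sle lam S (p ξ) (p ζ)) (hlam : 0 < lam)
    {η ζ : Ordinal} (hlt : η < ζ) (hζ : ζ < γ) :
    (p ζ).w ∩ Set.Iio (sInf (p η).C) = (p η).w := by
  have h := (hmono η ζ hlt hζ).2.1.1.2.1
  rwa [firstAbove_eq_sInf (unb_nonempty (p η).seq.1.1 hlam) (p η).w_sub] at h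

lemma w_mono (hmono : ∀ ξ ζ, ξ < ζ → ζ < γ → Q1Sle lam S (p ξ) (p ζ)) (hlam : 0 < lam)
    {η ζ : Ordinal} (hle : η ≤ ζ) (hζ : ζ < γ) : (p η).w ⊆ (p ζ).w := by
  rcases eq_or_lt_of_le hle with rfl | hlt
  · exact subset_rfl
  · rw [← w_eq hmono hlam hlt hζ]; exact inter_subset_left

lemma limW_inter (hmono : ∀ ξ ζ, ξ < ζ → ζ < γ → Q1Sle lam S (p ξ) (p ζ)) (hlam : 0 < lam)
    {ζ : Ordinal} (hζ : ζ < γ) : limW γ p ∩ Set.Iio (sInf (p ζ).C) = (p ζ).w := by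
  ext x
  simp only [mem_inter_iff, mem_Iio, mem_limW]
  constructor
  · rintro ⟨⟨ζ', hζ', hx⟩, hxlt⟩
    rcases le_total ζ' ζ with hle | hle
    · exact w_mono hmono hlam hle hζ hx
    · rcases eq_or_lt_of_le hle with rfl | hlt
      · exact hx
      · rw [← w_eq hmono hlam hlt hζ']; exact ⟨hx, hxlt⟩
  · intro hx
    exact ⟨⟨ζ, hζ, hx⟩, (p ζ).w_sub hx⟩

lemma limW_Iio (hmono : ∀ ξ ζ, ξ < ζ → ζ < γ → Q1Sle lam S (p ξ) (p ζ)) (hlam : 0 < lam)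
    (hne : (limC γ p).Nonempty) : limW γ p ⊆ Set.Iio (sInf (limC γ p)) := by
  rintro x hx
  obtain ⟨ζ, hζ, hxw⟩ := mem_limW.mp hx
  have h1 : x < sInf (p ζ).C := (p ζ).w_sub hxw
  have h2 : sInf (p ζ).C ≤ sInf (limC γ p) :=
    le_csInf hne (fun b hb => csInf_le (OrderBot.bddBelow _) (limC_subset hζ hb))
  exact lt_of_lt_of_le h1 h2

lemma firstAbove_limC (hmono : ∀ ξ ζ, ξ < ζ → ζ < γ → Q1Sle lam S (p ξ) (p ζ)) (hlam : 0 < lam)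
    (hne : (limC γ p).Nonempty) :
    firstAbove (limC γ p) (limW γ p) = sInf (limC γ p) :=
  firstAbove_eq_sInf hne (limW_Iio hmono hlam hne)

end Seq

/-- The intersection of fewer than `κ` clubs is a club. -/
lemma limC_club {κ : Cardinal.{0}} {S : Set Ordinal} {γ : Ordinal} {p : Ordinal → Q1S κ.ord S}
    (hκ : κ.IsInaccessible) (hγ : γ < κ.ord) (hγ0 : 0 < γ) : IsClubIn κ.ord (limC γ p) := by
  have hlamlim : Order.IsSuccLimit κ.ord := Cardinal.isSuccLimit_ord hκ.isRegular.aleph0_le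
  have hcof : (κ.ord).cof = κ := hκ.isRegular.cof_eq
  constructor
  · constructor
    · exact limC_Iio hγ0
    · -- unboundedness
      intro α hα
      set g : Ordinal → Ordinal := fun x =>
        (⨆ i : γ.ToType, nextC (p ((Ordinal.ToType.mk (o := γ)).symm i : Ordinal)).C x) ⊔ (x + 1)
        with hg_def
      have hg : ∀ x < κ.ord, x < g x ∧ g x < κ.ord ∧ ∀ ζ < γ, nextC (p ζ).C x ≤ g x := by
        intro x hx
        refine ⟨lt_of_lt_of_le (Order.lt_succ x) le_sup_right, ?_, ?_⟩
        · apply max_lt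
          · apply Ordinal.iSup_lt_ord
            · rw [Cardinal.mk_toType, hcof]; exact Cardinal.lt_ord.mp hγ
            · intro i; exact nextC_lt_lam (p _).seq.1.1 hx
          · exact hlamlim.succ_lt hx
        · intro ζ hζ
          refine le_trans ?_ le_sup_left
          have := le_ciSup (f := fun i : γ.ToType =>
              nextC (p ((Ordinal.ToType.mk (o := γ)).symm i : Ordinal)).C x)
            (Ordinal.bddAbove_range _) ((Ordinal.ToType.mk (o := γ)) ⟨ζ, hζ⟩)
          simpa using this
      set f : ℕ → Ordinal := fun n => g^[n] (α + 1) with hf_def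
      have hfsucc : ∀ n, f (n + 1) = g (f n) := by
        intro n; simp only [hf_def, Function.iterate_succ_apply']
      have hflt : ∀ n, f n < κ.ord := by
        intro n
        induction n with
        | zero => exact hlamlim.succ_lt hα
        | succ n ih => rw [hfsucc]; exact (hg _ ih).2.1
      have hfmono : ∀ n, f n < f (n + 1) := by
        intro n; rw [hfsucc]; exact (hg _ (hflt n)).1
      set β := ⨆ n, f n with hβ_def
      have hβlam : β < κ.ord := by
        apply Ordinal.iSup_lt_ord _ hflt
        rw [Cardinal.mk_nat, hcof]; exact hκ.aleph0_lt
      have hβle : ∀ n, f n ≤ β := fun n => le_ciSup (Ordinal.bddAbove_range _) n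
      have hαβ : α < β := lt_of_lt_of_le (Order.lt_succ α) (hβle 0)
      refine ⟨β, ?_, hαβ⟩
      rw [mem_limC]
      intro η hη
      apply club_mem_of_cofinal (p η).seq.1 hβlam (lt_of_le_of_lt (zero_le (a := α)) hαβ)
      intro y hy
      obtain ⟨n, hn⟩ : ∃ n, y < f n := by
        by_contra hcon
        push_neg at hcon
        exact absurd (csSup_le (range_nonempty f) (by rintro b ⟨n, rfl⟩; exact hcon n))
          (not_le.2 (hβ_def ▸ hy))
      refine ⟨nextC (p η).C (f n), (nextC_mem (p η).seq.1.1 (hflt n)).1, ?_, ?_⟩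
      · exact lt_trans hn (lt_nextC (p η).seq.1.1 (hflt n))
      · calc nextC (p η).C (f n) ≤ f (n + 1) := by rw [hfsucc]; exact (hg _ (hflt n)).2.2 η hη
          _ < f (n + 2) := hfmono (n + 1)
          _ ≤ β := hβle (n + 2)
  · -- closedness
    intro ξ hξ hne hsup
    rw [mem_limC]
    intro η hη
    have hsub : limC γ p ∩ Set.Iio ξ ⊆ (p η).C ∩ Set.Iio ξ :=
      inter_subset_inter_left _ (limC_subset hη)
    have hne' : ((p η).C ∩ Set.Iio ξ).Nonempty := hne.mono hsub
    have hbdd : BddAbove ((p η).C ∩ Set.Iio ξ) :=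
      bddAbove_of_subset_Iio (lam := κ.ord) (fun x hx => lt_trans hx.2 hξ)
    refine (p η).seq.1.2 ξ hξ hne' (le_antisymm ?_ (csSup_le hne' (fun y hy => hy.2.le)))
    calc ξ = sSup (limC γ p ∩ Set.Iio ξ) := hsup
      _ ≤ sSup ((p η).C ∩ Set.Iio ξ) := csSup_le_csSup hbdd hne hsub
end Q1SAux
namespace Q1SAux
open Set

lemma shrink {u : Set Ordinal} {a b : Ordinal} (hab : a ≤ b) :
    u ∩ Set.Iio b ∩ Set.Iio a = u ∩ Set.Iio a := by
  rw [inter_assoc, Iio_inter_Iio, inf_eq_right.mpr hab]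

lemma union_singleton_inter {u : Set Ordinal} {a ξ : Ordinal} (h : ξ ≤ a) :
    (u ∪ {a}) ∩ Set.Iio ξ = u ∩ Set.Iio ξ := by
  ext x
  simp only [mem_inter_iff, mem_union, mem_singleton_iff, mem_Iio]
  constructor
  · rintro ⟨hx | rfl, hlt⟩
    · exact ⟨hx, hlt⟩
    · exact absurd hlt (not_lt.2 h)
  · rintro ⟨hx, hlt⟩
    exact ⟨Or.inl hx, hlt⟩

lemma exists_greatest_below {lam : Ordinal} {C : Set Ordinal} (hC : IsClubIn lam C)
    (hlam : 0 < lam) {x : Ordinal} (hx : x < lam) (hge : sInf C ≤ x) :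
    ∃ δ ∈ C, δ ≤ x ∧ x < nextC C δ := by
  have hAsub : C ∩ Set.Iic x ⊆ Set.Iio lam := fun y hy => lt_of_le_of_lt hy.2 hx
  have hbdd : BddAbove (C ∩ Set.Iic x) := bddAbove_of_subset_Iio hAsub
  have hAne : (C ∩ Set.Iic x).Nonempty := ⟨sInf C, csInf_mem (unb_nonempty hC.1 hlam), hge⟩
  set δ := sSup (C ∩ Set.Iic x) with hδ_def
  have hδx : δ ≤ x := csSup_le hAne (fun y hy => hy.2)
  have hδC : δ ∈ C := by
    by_cases hmem : δ ∈ C ∩ Set.Iic x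
    · exact hmem.1
    · have hAeq : C ∩ Set.Iio δ = C ∩ Set.Iic x := by
        apply subset_antisymm
        · exact fun y hy => ⟨hy.1, le_trans hy.2.le hδx⟩
        · intro y hy
          refine ⟨hy.1, lt_of_le_of_ne (le_csSup hbdd hy) ?_⟩
          rintro rfl; exact hmem hy
      exact hC.2 δ (lt_of_le_of_lt hδx hx) (hAeq ▸ hAne) (by rw [hAeq])
  refine ⟨δ, hδC, hδx, ?_⟩
  by_contra hcon
  push_neg at hcon
  have hmem := nextC_mem hC.1 (lt_of_le_of_lt hδx hx)
  exact absurd hmem.2 (not_lt.2 (le_csSup hbdd ⟨hmem.1, hcon⟩))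

section Seq2

variable {lam : Ordinal} {S : Set Ordinal} {γ : Ordinal} {p : Ordinal → Q1S lam S}

/-- The sup of the `nextC`s of the `(p ζ).C`s is `nextC (limC γ p)`. -/
lemma exists_nextC_gt (hmono : ∀ ξ ζ, ξ < ζ → ζ < γ → Q1Sle lam S (p ξ) (p ζ))
    (hγlim : Order.IsSuccLimit γ) (hclub : IsClubIn lam (limC γ p))
    {δ x : Ordinal} (hδ : δ ∈ limC γ p) (hx : x < nextC (limC γ p) δ) :
    ∃ ζ < γ, x < nextC (p ζ).C δ := by
  have hδlam : δ < lam := limC_Iio hγlim.pos hδ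
  have hν := nextC_mem hclub.1 hδlam
  have hνlam : nextC (limC γ p) δ < lam := nextC_lt_lam hclub.1 hδlam
  have hle : ∀ ζ < γ, nextC (p ζ).C δ ≤ nextC (limC γ p) δ :=
    fun ζ hζ => nextC_le (limC_subset hζ hν.1) hν.2
  have hmonon : ∀ η ζ, η ≤ ζ → ζ < γ → nextC (p η).C δ ≤ nextC (p ζ).C δ := by
    intro η ζ h1 h2
    exact nextC_mono (C_anti hmono h1 h2) ⟨_, nextC_mem (p ζ).seq.1.1 hδlam⟩
  set A := (fun ζ => nextC (p ζ).C δ) '' Set.Iio γ with hA_def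
  have hAne : A.Nonempty := ⟨_, ⟨0, hγlim.pos, rfl⟩⟩
  have hAbdd : BddAbove A := by
    refine ⟨nextC (limC γ p) δ, ?_⟩
    rintro _ ⟨ζ, hζ, rfl⟩
    exact hle ζ hζ
  by_contra hcon
  push_neg at hcon
  have hσx : sSup A ≤ x := csSup_le hAne (by rintro _ ⟨ζ, hζ, rfl⟩; exact hcon ζ hζ)
  have hδσ : δ < sSup A :=
    lt_of_lt_of_le (lt_nextC (p 0).seq.1.1 hδlam) (le_csSup hAbdd ⟨0, hγlim.pos, rfl⟩)
  have hσν : sSup A < nextC (limC γ p) δ := lt_of_le_of_lt hσx hx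
  have hσlam : sSup A < lam := lt_trans hσν hνlam
  have hσq : sSup A ∉ limC γ p := by
    intro h
    exact absurd (nextC_le h hδσ) (not_le.2 hσν)
  rw [mem_limC] at hσq
  push_neg at hσq
  obtain ⟨η, hη, hσCη⟩ := hσq
  apply hσCη
  by_cases hattain : ∃ ζ, η ≤ ζ ∧ ζ < γ ∧ nextC (p ζ).C δ = sSup A
  · obtain ⟨ζ, h1, h2, h3⟩ := hattain
    exact C_anti hmono h1 h2 (h3 ▸ (nextC_mem (p ζ).seq.1.1 hδlam).1)
  · push_neg at hattain
    apply club_mem_of_cofinal (p η).seq.1 hσlam (lt_of_le_of_lt (zero_le (a := δ)) hδσ)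
    intro y hy
    obtain ⟨ζ₀, hζ₀, hyζ₀⟩ : ∃ ζ₀ < γ, y < nextC (p ζ₀).C δ := by
      by_contra hcon2
      push_neg at hcon2
      exact absurd (csSup_le hAne (by rintro _ ⟨ζ, hζ, rfl⟩; exact hcon2 ζ hζ)) (not_le.2 hy)
    have hζγ : ζ₀ ⊔ η < γ := max_lt hζ₀ hη
    refine ⟨nextC (p (ζ₀ ⊔ η)).C δ,
      C_anti hmono le_sup_right hζγ (nextC_mem (p _).seq.1.1 hδlam).1, ?_, ?_⟩
    · exact lt_of_lt_of_le hyζ₀ (hmonon _ _ le_sup_left hζγ)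
    · exact lt_of_le_of_ne (le_csSup hAbdd ⟨_, hζγ, rfl⟩) (hattain _ le_sup_right hζγ)

/-- Coherence of the extension functions along the sequence. -/
lemma coherence (hmono : ∀ ξ ζ, ξ < ζ → ζ < γ → Q1Sle lam S (p ξ) (p ζ))
    {η ζ δ : Ordinal} {v : Set Ordinal} (hη : η ≤ ζ) (hζ : ζ < γ)
    (hδζ : δ ∈ (p ζ).C) (hδη : δ ∈ (p η).C)
    (hv : v ∈ posPlusS S (p ζ).C (p ζ).c (p ζ).w δ) :
    (p ζ).c δ v ∩ Set.Iio (nextC (p η).C δ) = (p η).c δ v := by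
  have hδlam : δ < lam := (p ζ).seq.1.1.1 hδζ
  have hvδ : v ⊆ Set.Iio δ := hv.1.1
  have hext := (p ζ).seq.2.1.2 δ hδζ v hvδ
  rcases eq_or_lt_of_le hη with rfl | hlt
  · exact inter_eq_left.mpr hext.1
  · have h3 := (hmono η ζ hlt hζ).2.2 δ hδζ ⟨_, nextC_mem (p ζ).seq.1.1 hδlam⟩ v hv
    have hδmem : δ ∈ (p ζ).c δ v := (p ζ).seq.2.2.1 δ hδζ v hvδ
    have hnn : nextC (p η).C δ ≤ nextC (p ζ).C δ :=
      nextC_mono (C_anti hmono hlt.le hζ) ⟨_, nextC_mem (p ζ).seq.1.1 hδlam⟩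
    have hd := h3.1.1.2.2.1 δ hδη hvδ ⟨_, nextC_mem (p η).seq.1.1 hδlam⟩ hnn
    rw [hext.2.2] at hd
    rcases hd with hd | hd
    · exact hd.symm
    · exfalso
      have hmem2 : δ ∈ (p ζ).c δ v ∩ Set.Iio (nextC (p η).C δ) :=
        ⟨hδmem, lt_nextC (p η).seq.1.1 hδlam⟩
      rw [← hd] at hmem2
      exact absurd (hvδ hmem2) (lt_irrefl δ)

end Seq2
end Q1SAux
namespace Q1SAux
open Set

section Seq3

variable {lam : Ordinal} {S : Set Ordinal} {γ : Ordinal} {p : Ordinal → Q1S lam S}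

lemma natLimitC_eq {δ : Ordinal} {v : Set Ordinal} (hδ : δ ∈ limC γ p) (hvδ : v ⊆ Set.Iio δ)
    (hall : ∀ ζ < γ, v ∈ posPlusS S (p ζ).C (p ζ).c (p ζ).w δ) :
    natLimitC lam S γ p δ v = ⋃ ζ ∈ Set.Iio γ, (p ζ).c δ v := by
  have hδ' : δ ∈ ⋂ ξ ∈ Set.Iio γ, (p ξ).C := hδ
  rw [natLimitC, if_pos hδ', if_pos hvδ, if_pos hall]

lemma natLimitC_eq_else {δ : Ordinal} {v : Set Ordinal} (hδ : δ ∈ limC γ p)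
    (hvδ : v ⊆ Set.Iio δ)
    (hnall : ¬ ∀ ζ < γ, v ∈ posPlusS S (p ζ).C (p ζ).c (p ζ).w δ) :
    natLimitC lam S γ p δ v = v ∪ {δ} := by
  have hδ' : δ ∈ ⋂ ξ ∈ Set.Iio γ, (p ξ).C := hδ
  rw [natLimitC, if_pos hδ', if_pos hvδ, if_neg hnall]

lemma natLimitC_inter (hmono : ∀ ξ ζ, ξ < ζ → ζ < γ → Q1Sle lam S (p ξ) (p ζ))
    {δ : Ordinal} {v : Set Ordinal} (hδ : δ ∈ limC γ p) (hvδ : v ⊆ Set.Iio δ)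
    (hall : ∀ ζ < γ, v ∈ posPlusS S (p ζ).C (p ζ).c (p ζ).w δ)
    {η : Ordinal} (hη : η < γ) :
    natLimitC lam S γ p δ v ∩ Set.Iio (nextC (p η).C δ) = (p η).c δ v := by
  rw [natLimitC_eq hδ hvδ hall]
  ext x
  simp only [mem_inter_iff, mem_iUnion, mem_Iio, exists_prop]
  constructor
  · rintro ⟨⟨ζ, hζ, hx⟩, hxlt⟩
    rcases le_total ζ η with hle | hle
    · have hcoh := coherence hmono hle hη (limC_subset hη hδ)
        (limC_subset (lt_of_le_of_lt hle hη) hδ) (hall η hη)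
      rw [← hcoh] at hx
      exact hx.1
    · have hcoh := coherence hmono hle hζ (limC_subset hζ hδ)
        (limC_subset hη hδ) (hall ζ hζ)
      rw [← hcoh]
      exact ⟨hx, hxlt⟩
  · intro hx
    exact ⟨⟨η, hη, hx⟩, ((p η).seq.2.1.2 δ (limC_subset hη hδ) v hvδ).1 hx⟩

lemma natLimitC_subset (hmono : ∀ ξ ζ, ξ < ζ → ζ < γ → Q1Sle lam S (p ξ) (p ζ))
    (hγlim : Order.IsSuccLimit γ) (hclub : IsClubIn lam (limC γ p))
    {δ : Ordinal} {v : Set Ordinal} (hδ : δ ∈ limC γ p) (hvδ : v ⊆ Set.Iio δ)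
    (hall : ∀ ζ < γ, v ∈ posPlusS S (p ζ).C (p ζ).c (p ζ).w δ) :
    natLimitC lam S γ p δ v ⊆ Set.Iio (nextC (limC γ p) δ) := by
  have hδlam : δ < lam := limC_Iio hγlim.pos hδ
  rw [natLimitC_eq hδ hvδ hall]
  rintro x hx
  simp only [mem_iUnion, exists_prop] at hx
  obtain ⟨ζ, hζ, hx⟩ := hx
  have h1 : x < nextC (p ζ).C δ := ((p ζ).seq.2.1.2 δ (limC_subset hζ hδ) v hvδ).1 hx
  have h2 : nextC (p ζ).C δ ≤ nextC (limC γ p) δ :=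
    nextC_le (limC_subset hζ (nextC_mem hclub.1 hδlam).1) (nextC_mem hclub.1 hδlam).2
  exact lt_of_lt_of_le h1 h2

lemma natLimitC_inter_self (hγ0 : 0 < γ)
    {δ : Ordinal} {v : Set Ordinal} (hδ : δ ∈ limC γ p) (hvδ : v ⊆ Set.Iio δ)
    (hall : ∀ ζ < γ, v ∈ posPlusS S (p ζ).C (p ζ).c (p ζ).w δ) :
    natLimitC lam S γ p δ v ∩ Set.Iio δ = v := by
  rw [natLimitC_eq hδ hvδ hall]
  ext x
  simp only [mem_inter_iff, mem_iUnion, mem_Iio, exists_prop]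
  constructor
  · rintro ⟨⟨ζ, hζ, hx⟩, hxlt⟩
    have := ((p ζ).seq.2.1.2 δ (limC_subset hζ hδ) v hvδ).2.2
    rw [← this]
    exact ⟨hx, hxlt⟩
  · intro hx
    have := ((p 0).seq.2.1.2 δ (limC_subset hγ0 hδ) v hvδ).2.2
    refine ⟨⟨0, hγ0, ?_⟩, hvδ hx⟩
    rw [← this] at hx
    exact hx.1

lemma mem_natLimitC_self (hγ0 : 0 < γ)
    {δ : Ordinal} {v : Set Ordinal} (hδ : δ ∈ limC γ p) (hvδ : v ⊆ Set.Iio δ) :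
    δ ∈ natLimitC lam S γ p δ v := by
  by_cases hall : ∀ ζ < γ, v ∈ posPlusS S (p ζ).C (p ζ).c (p ζ).w δ
  · rw [natLimitC_eq hδ hvδ hall]
    simp only [mem_iUnion, exists_prop]
    exact ⟨0, hγ0, (p 0).seq.2.2.1 δ (limC_subset hγ0 hδ) v hvδ⟩
  · rw [natLimitC_eq_else hδ hvδ hall]
    exact Or.inr rfl

/-- Restriction of a `posPlusS` condition at a point of the limit club. -/
lemma posPlusS_restrict (hmono : ∀ ξ ζ, ξ < ζ → ζ < γ → Q1Sle lam S (p ξ) (p ζ))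
    (hγlim : Order.IsSuccLimit γ) (hlam : 0 < lam) (hclub : IsClubIn lam (limC γ p))
    {α₀ δ : Ordinal} {u : Set Ordinal}
    (hu : u ∈ posPlusS S (limC γ p) (natLimitC lam S γ p) (limW γ p) α₀)
    (hδ : δ ∈ limC γ p) (hδα : δ ≤ α₀) :
    u ∩ Set.Iio δ ∈ posPlusS S (limC γ p) (natLimitC lam S γ p) (limW γ p) δ := by
  have hqne : (limC γ p).Nonempty := unb_nonempty hclub.1 hlam
  have hfa : firstAbove (limC γ p) (limW γ p) = sInf (limC γ p) :=
    firstAbove_limC hmono hlam hqne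
  have hmδ : sInf (limC γ p) ≤ δ := csInf_le (OrderBot.bddBelow _) hδ
  refine ⟨⟨inter_subset_right, ?_, ?_, ?_⟩, ?_⟩
  · rw [hfa, shrink hmδ, ← hfa]
    exact hu.1.2.1
  · intro β hβ hwβ hne hle
    have hβδ : β < δ :=
      lt_of_lt_of_le (lt_nextC hclub.1 (hclub.1.1 hβ)) hle
    rw [shrink hβδ.le, shrink hle]
    exact hu.1.2.2.1 β hβ hwβ hne (le_trans hle hδα)
  · intro α' hsup hα'C hne1 hlim hne2 hle
    obtain ⟨z, hz1, hz2⟩ := hne2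
    have hα'lam : α' < lam := lt_trans hz2 (hclub.1.1 hz1)
    have hα'δ : α' < δ := lt_of_lt_of_le (lt_nextC hclub.1 hα'lam) hle
    rw [shrink hle, shrink hα'δ.le]
    exact hu.1.2.2.2 α' hsup hα'C hne1 hlim ⟨z, hz1, hz2⟩ (le_trans hle hδα)
  · -- S-closedness of the restriction
    intro ξ hne hsup hξS
    rcases lt_trichotomy ξ δ with hlt | rfl | hgt
    · have hset : (u ∩ Set.Iio δ ∪ {δ}) ∩ Set.Iio ξ = (u ∪ {α₀}) ∩ Set.Iio ξ := by
        rw [union_singleton_inter hlt.le, union_singleton_inter (le_trans hlt.le hδα),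
          shrink hlt.le]
      rw [hset] at hne hsup
      have hmem := hu.2 ξ hne hsup hξS
      rcases hmem with hmem | hmem
      · exact Or.inl ⟨hmem, hlt⟩
      · rw [mem_singleton_iff] at hmem
        exfalso
        rw [hmem] at hlt
        exact absurd hδα (not_le.2 hlt)
    · exact Or.inr rfl
    · exfalso
      have hsub : (u ∩ Set.Iio δ ∪ {δ}) ∩ Set.Iio ξ ⊆ Set.Iic δ := by
        rintro x ⟨hx | hx, -⟩
        · exact mem_Iic.mpr (le_of_lt (mem_Iio.mp hx.2))
        · exact mem_Iic.mpr (le_of_eq (mem_singleton_iff.mp hx))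
      have h2 := sSup_le_of_subset_Iic hsub
      rw [← hsup] at h2
      exact absurd h2 (not_le.2 hgt)

end Seq3
end Q1SAux
namespace Q1SAux
open Set

lemma sandwich {u : Set Ordinal} {a b t : Ordinal} (h : u ∩ Set.Iio a = u ∩ Set.Iio b)
    (h1 : a ≤ t) (h2 : t ≤ b) : u ∩ Set.Iio t = u ∩ Set.Iio a := by
  apply subset_antisymm
  · intro x hx
    have hxb : x ∈ u ∩ Set.Iio b := ⟨hx.1, mem_Iio.mpr (lt_of_lt_of_le (mem_Iio.mp hx.2) h2)⟩
    rw [← h] at hxb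
    exact hxb
  · intro x hx
    exact ⟨hx.1, mem_Iio.mpr (lt_of_lt_of_le (mem_Iio.mp hx.2) h1)⟩

section Seq4

variable {lam : Ordinal} {S : Set Ordinal} {γ : Ordinal} {p : Ordinal → Q1S lam S}

lemma sInf_le_sInf_limC (hlam : 0 < lam) (hqne : (limC γ p).Nonempty) {ζ : Ordinal}
    (hζ : ζ < γ) : sInf (p ζ).C ≤ sInf (limC γ p) :=
  le_csInf hqne (fun b hb => csInf_le (OrderBot.bddBelow _) (limC_subset hζ hb))

/-- MAIN LEMMA: membership in the `posPlusS` of the natural limit implies membership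
in the `posPlusS` of each condition of the sequence. -/
lemma main_transfer (hmono : ∀ ξ ζ, ξ < ζ → ζ < γ → Q1Sle lam S (p ξ) (p ζ))
    (hγlim : Order.IsSuccLimit γ) (hlam : 0 < lam) (hclub : IsClubIn lam (limC γ p)) :
    ∀ α₀, α₀ ∈ limC γ p →
      ∀ u ∈ posPlusS S (limC γ p) (natLimitC lam S γ p) (limW γ p) α₀,
      ∀ η < γ, u ∈ posPlusS S (p η).C (p η).c (p η).w α₀ := by
  intro α₀
  induction α₀ using Ordinal.induction with
  | h α₀ IH =>
  intro hα₀ u hu η hη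
  have hqne : (limC γ p).Nonempty := unb_nonempty hclub.1 hlam
  have hmmem : sInf (limC γ p) ∈ limC γ p := csInf_mem hqne
  have hα₀lam : α₀ < lam := limC_Iio hγlim.pos hα₀
  have hCη : IsClubIn lam (p η).C := (p η).seq.1
  have hu8 : u ∩ Set.Iio (sInf (limC γ p)) = limW γ p := by
    have h := hu.1.2.1
    rwa [firstAbove_limC hmono hlam hqne] at h
  have hqwIio : limW γ p ⊆ Set.Iio (sInf (limC γ p)) := limW_Iio hmono hlam hqne
  -- transfer of restrictions below `sInf (p ζ).C`
  have htr : ∀ ζ, ζ < γ → ∀ t, t ≤ sInf (p ζ).C → u ∩ Set.Iio t = (p ζ).w ∩ Set.Iio t := by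
    intro ζ hζ t ht
    calc u ∩ Set.Iio t
        = u ∩ Set.Iio (sInf (p ζ).C) ∩ Set.Iio t := (shrink ht).symm
      _ = limW γ p ∩ Set.Iio (sInf (p ζ).C) ∩ Set.Iio t := by
          rw [restrict₂ hu8 (sInf_le_sInf_limC hlam hqne hζ)]
      _ = (p ζ).w ∩ Set.Iio t := by rw [limW_inter hmono hlam hζ]
  refine ⟨⟨hu.1.1, ?_, ?_, ?_⟩, hu.2⟩
  · -- clause (ii)
    rw [firstAbove_eq_sInf (unb_nonempty (p η).seq.1.1 hlam) (p η).w_sub]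
    calc u ∩ Set.Iio (sInf (p η).C)
        = limW γ p ∩ Set.Iio (sInf (p η).C) :=
          restrict₂ hu8 (sInf_le_sInf_limC hlam hqne hη)
      _ = (p η).w := limW_inter hmono hlam hη
  · -- clause (iii)
    intro β hβCη hwβ hβne hβle
    have hβlam : β < lam := hCη.1.1 hβCη
    by_cases hcase : β < sInf (limC γ p)
    · by_cases hex : ∃ ζ < γ, β < sInf (p ζ).C
      · obtain ⟨ζ₀, hζ₀, hβζ₀⟩ := hex
        have hζγ : ζ₀ ⊔ Order.succ η < γ := max_lt hζ₀ (hγlim.succ_lt hη)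
        have hηζ : η < ζ₀ ⊔ Order.succ η := lt_of_lt_of_le (Order.lt_succ η) le_sup_right
        have hβζ : β < sInf (p (ζ₀ ⊔ Order.succ η)).C :=
          lt_of_lt_of_le hβζ₀ (sInf_C_mono hmono hlam le_sup_left hζγ)
        have hnleζ : nextC (p η).C β ≤ sInf (p (ζ₀ ⊔ Order.succ η)).C :=
          nextC_le (C_anti hmono hηζ.le hζγ
            (csInf_mem (unb_nonempty (p _).seq.1.1 hlam))) hβζ
        have hw := (hmono η _ hηζ hζγ).2.1.1.2.2.1 β hβCη hwβ hβne hnleζ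
        rw [htr _ hζγ β (le_of_lt hβζ), htr _ hζγ _ hnleζ]
        exact hw
      · push_neg at hex
        have hqwβ : limW γ p ⊆ Set.Iio β := by
          rintro x hx
          obtain ⟨ζ, hζ, hxw⟩ := mem_limW.mp hx
          exact mem_Iio.mpr (lt_of_lt_of_le ((p ζ).w_sub hxw) (hex ζ hζ))
        have hnle : nextC (p η).C β ≤ sInf (limC γ p) := nextC_le (limC_subset hη hmmem) hcase
        right
        have h1 : u ∩ Set.Iio β = limW γ p := by
          rw [restrict₂ hu8 (le_of_lt hcase)]
          exact inter_eq_left.mpr hqwβ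
        have h2 : u ∩ Set.Iio (nextC (p η).C β) = limW γ p := by
          rw [restrict₂ hu8 hnle]
          exact inter_eq_left.mpr
            (fun x hx => mem_Iio.mpr (lt_of_lt_of_le (mem_Iio.mp (hqwβ hx))
              (le_of_lt (lt_nextC hCη.1 hβlam))))
        rw [h1, h2]
    · push_neg at hcase
      obtain ⟨δ, hδq, hδβ, hβν⟩ := exists_greatest_below hclub hlam hβlam hcase
      have hδlam : δ < lam := hclub.1.1 hδq
      have hδα : δ < α₀ := lt_of_le_of_lt hδβ (lt_of_lt_of_le (lt_nextC hCη.1 hβlam) hβle)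
      have hνα : nextC (limC γ p) δ ≤ α₀ := nextC_le hα₀ hδα
      have hqwδ : limW γ p ⊆ Set.Iio δ := fun x hx =>
        mem_Iio.mpr (lt_of_lt_of_le (mem_Iio.mp (hqwIio hx)) (csInf_le (OrderBot.bddBelow _) hδq))
      have hnextβle : nextC (p η).C β ≤ nextC (limC γ p) δ :=
        nextC_le (limC_subset hη (nextC_mem hclub.1 hδlam).1) hβν
      rcases hu.1.2.2.1 δ hδq hqwδ ⟨α₀, hα₀, hδα⟩ hνα with hdisj | hdisj
      · -- the limit follows the union of the `c`s on `[δ, nextC)`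
        have hvmem := posPlusS_restrict hmono hγlim hlam hclub hu hδq (le_of_lt hδα)
        have hall : ∀ ζ < γ, u ∩ Set.Iio δ ∈ posPlusS S (p ζ).C (p ζ).c (p ζ).w δ :=
          fun ζ hζ => IH δ hδα hδq _ hvmem ζ hζ
        obtain ⟨ζ₁, hζ₁, hβζ₁⟩ := exists_nextC_gt hmono hγlim hclub hδq hβν
        have hζγ : ζ₁ ⊔ Order.succ η < γ := max_lt hζ₁ (hγlim.succ_lt hη)
        have hηζ : η < ζ₁ ⊔ Order.succ η := lt_of_lt_of_le (Order.lt_succ η) le_sup_right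
        have hβζ : β < nextC (p (ζ₁ ⊔ Order.succ η)).C δ :=
          lt_of_lt_of_le hβζ₁ (nextC_mono (C_anti hmono le_sup_left hζγ)
            ⟨_, nextC_mem (p _).seq.1.1 hδlam⟩)
        have hXeq : u ∩ Set.Iio (nextC (p (ζ₁ ⊔ Order.succ η)).C δ)
            = (p (ζ₁ ⊔ Order.succ η)).c δ (u ∩ Set.Iio δ) := by
          have h1 : nextC (p (ζ₁ ⊔ Order.succ η)).C δ ≤ nextC (limC γ p) δ :=
            nextC_le (limC_subset hζγ (nextC_mem hclub.1 hδlam).1) (nextC_mem hclub.1 hδlam).2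
          rw [restrict₂ hdisj.symm h1]
          rw [natLimitC_inter hmono hδq inter_subset_right hall hζγ]
        have h3 := (hmono η _ hηζ hζγ).2.2 δ (limC_subset hζγ hδq)
          ⟨_, nextC_mem (p _).seq.1.1 hδlam⟩ _ (hall _ hζγ)
        have hd2 := h3.1.1.2.2.1 β hβCη
          (fun x hx => mem_Iio.mpr (lt_of_lt_of_le (mem_Iio.mp hx.2) hδβ)) hβne
          (nextC_le (C_anti hmono hηζ.le hζγ (nextC_mem (p _).seq.1.1 hδlam).1) hβζ)
        rw [restrict₂ hXeq (le_of_lt hβζ),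
          restrict₂ hXeq (nextC_le (C_anti hmono hηζ.le hζγ
            (nextC_mem (p _).seq.1.1 hδlam).1) hβζ)]
        exact hd2
      · -- the limit is empty on `[δ, nextC)`
        right
        have h1 : u ∩ Set.Iio β = u ∩ Set.Iio δ := sandwich hdisj hδβ (le_of_lt hβν)
        have h2 : u ∩ Set.Iio (nextC (p η).C β) = u ∩ Set.Iio δ :=
          sandwich hdisj (le_trans hδβ (le_of_lt (lt_nextC hCη.1 hβlam))) hnextβle
        rw [h1, h2]
  · -- clause (iv)
    intro α' hsupw hα'Cη hne1 hlim hne2 hle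
    have hα'lam : α' < lam := by
      obtain ⟨z, hz1, hz2⟩ := hne2
      exact lt_trans hz2 (hCη.1.1 hz1)
    have hα'α₀ : α' < α₀ := lt_of_lt_of_le (lt_nextC hCη.1 hα'lam) hle
    by_cases hcase : α' < sInf (limC γ p)
    · by_cases hex : ∃ ζ < γ, α' < sInf (p ζ).C
      · obtain ⟨ζ₀, hζ₀, hβζ₀⟩ := hex
        have hζγ : ζ₀ ⊔ Order.succ η < γ := max_lt hζ₀ (hγlim.succ_lt hη)
        have hηζ : η < ζ₀ ⊔ Order.succ η := lt_of_lt_of_le (Order.lt_succ η) le_sup_right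
        have hβζ : α' < sInf (p (ζ₀ ⊔ Order.succ η)).C :=
          lt_of_lt_of_le hβζ₀ (sInf_C_mono hmono hlam le_sup_left hζγ)
        have hnleζ : nextC (p η).C α' ≤ sInf (p (ζ₀ ⊔ Order.succ η)).C :=
          nextC_le (C_anti hmono hηζ.le hζγ
            (csInf_mem (unb_nonempty (p _).seq.1.1 hlam))) hβζ
        have hw := (hmono η _ hηζ hζγ).2.1.1.2.2.2 α' hsupw hα'Cη hne1 hlim hne2 hnleζ
        rw [htr _ hζγ α' (le_of_lt hβζ), htr _ hζγ _ hnleζ]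
        exact hw
      · push_neg at hex
        have hqwβ : limW γ p ⊆ Set.Iio α' := by
          rintro x hx
          obtain ⟨ζ, hζ, hxw⟩ := mem_limW.mp hx
          exact mem_Iio.mpr (lt_of_lt_of_le ((p ζ).w_sub hxw) (hex ζ hζ))
        have hnle : nextC (p η).C α' ≤ sInf (limC γ p) :=
          nextC_le (limC_subset hη hmmem) hcase
        have h1 : u ∩ Set.Iio α' = limW γ p := by
          rw [restrict₂ hu8 (le_of_lt hcase)]
          exact inter_eq_left.mpr hqwβ
        have h2 : u ∩ Set.Iio (nextC (p η).C α') = limW γ p := by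
          rw [restrict₂ hu8 hnle]
          exact inter_eq_left.mpr
            (fun x hx => mem_Iio.mpr (lt_of_lt_of_le (mem_Iio.mp (hqwβ hx))
              (le_of_lt (lt_nextC hCη.1 hα'lam))))
        rw [h1, h2]
    · push_neg at hcase
      obtain ⟨δ, hδq, hδα', hαν⟩ := exists_greatest_below hclub hlam hα'lam hcase
      have hδlam : δ < lam := hclub.1.1 hδq
      have hα'nq : α' ∉ limC γ p := fun h => hα'Cη (limC_subset hη h)
      have hδα'lt : δ < α' := lt_of_le_of_ne hδα' (fun h => hα'nq (h ▸ hδq))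
      have hδα : δ < α₀ := lt_trans hδα'lt hα'α₀
      have hνα : nextC (limC γ p) δ ≤ α₀ := nextC_le hα₀ hδα
      have hqwδ : limW γ p ⊆ Set.Iio δ := fun x hx =>
        mem_Iio.mpr (lt_of_lt_of_le (mem_Iio.mp (hqwIio hx)) (csInf_le (OrderBot.bddBelow _) hδq))
      have hnextle : nextC (p η).C α' ≤ nextC (limC γ p) δ :=
        nextC_le (limC_subset hη (nextC_mem hclub.1 hδlam).1) hαν
      rcases hu.1.2.2.1 δ hδq hqwδ ⟨α₀, hα₀, hδα⟩ hνα with hdisj | hdisj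
      · have hvmem := posPlusS_restrict hmono hγlim hlam hclub hu hδq (le_of_lt hδα)
        have hall : ∀ ζ < γ, u ∩ Set.Iio δ ∈ posPlusS S (p ζ).C (p ζ).c (p ζ).w δ :=
          fun ζ hζ => IH δ hδα hδq _ hvmem ζ hζ
        obtain ⟨ζ₁, hζ₁, hβζ₁⟩ := exists_nextC_gt hmono hγlim hclub hδq hαν
        have hζγ : ζ₁ ⊔ Order.succ η < γ := max_lt hζ₁ (hγlim.succ_lt hη)
        have hηζ : η < ζ₁ ⊔ Order.succ η := lt_of_lt_of_le (Order.lt_succ η) le_sup_right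
        have hβζ : α' < nextC (p (ζ₁ ⊔ Order.succ η)).C δ :=
          lt_of_lt_of_le hβζ₁ (nextC_mono (C_anti hmono le_sup_left hζγ)
            ⟨_, nextC_mem (p _).seq.1.1 hδlam⟩)
        have hXeq : u ∩ Set.Iio (nextC (p (ζ₁ ⊔ Order.succ η)).C δ)
            = (p (ζ₁ ⊔ Order.succ η)).c δ (u ∩ Set.Iio δ) := by
          have h1 : nextC (p (ζ₁ ⊔ Order.succ η)).C δ ≤ nextC (limC γ p) δ :=
            nextC_le (limC_subset hζγ (nextC_mem hclub.1 hδlam).1) (nextC_mem hclub.1 hδlam).2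
          rw [restrict₂ hdisj.symm h1]
          rw [natLimitC_inter hmono hδq inter_subset_right hall hζγ]
        have h3 := (hmono η _ hηζ hζγ).2.2 δ (limC_subset hζγ hδq)
          ⟨_, nextC_mem (p _).seq.1.1 hδlam⟩ _ (hall _ hζγ)
        have hsupv : sSup (u ∩ Set.Iio δ) < α' :=
          lt_of_le_of_lt (sSup_le_of_subset_Iic
            (fun x hx => mem_Iic.mpr (le_of_lt (mem_Iio.mp hx.2)))) hδα'lt
        have hd2 := h3.1.1.2.2.2 α' hsupv hα'Cη hne1 hlim hne2
          (nextC_le (C_anti hmono hηζ.le hζγ (nextC_mem (p _).seq.1.1 hδlam).1) hβζ)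
        rw [restrict₂ hXeq (le_of_lt hβζ),
          restrict₂ hXeq (nextC_le (C_anti hmono hηζ.le hζγ
            (nextC_mem (p _).seq.1.1 hδlam).1) hβζ)]
        exact hd2
      · have h1 : u ∩ Set.Iio α' = u ∩ Set.Iio δ := sandwich hdisj hδα' (le_of_lt hαν)
        have h2 : u ∩ Set.Iio (nextC (p η).C α') = u ∩ Set.Iio δ :=
          sandwich hdisj (le_trans hδα' (le_of_lt (lt_nextC hCη.1 hα'lam))) hnextle
        rw [h1, h2]

end Seq4
end Q1SAux
namespace Q1SAux
open Set

section Seq5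

variable {lam : Ordinal} {S : Set Ordinal} {γ : Ordinal} {p : Ordinal → Q1S lam S}

lemma natLimitC_extFun (hmono : ∀ ξ ζ, ξ < ζ → ζ < γ → Q1Sle lam S (p ξ) (p ζ))
    (hγlim : Order.IsSuccLimit γ) (hclub : IsClubIn lam (limC γ p))
    {α : Ordinal} (hα : α ∈ limC γ p) :
    ExtFun α (nextC (limC γ p) α) (natLimitC lam S γ p α) := by
  intro u hu
  have hαlam : α < lam := limC_Iio hγlim.pos hα
  by_cases hall : ∀ ζ < γ, u ∈ posPlusS S (p ζ).C (p ζ).c (p ζ).w α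
  · refine ⟨natLimitC_subset hmono hγlim hclub hα hu hall, ?_,
      natLimitC_inter_self hγlim.pos hα hu hall⟩
    intro hsub
    exact lt_irrefl α (mem_Iio.mp (hsub (mem_natLimitC_self hγlim.pos hα hu)))
  · rw [natLimitC_eq_else hα hu hall]
    refine ⟨?_, ?_, ?_⟩
    · rintro x (hx | hx)
      · exact mem_Iio.mpr (lt_trans (mem_Iio.mp (hu hx)) (lt_nextC hclub.1 hαlam))
      · rw [mem_singleton_iff.mp hx]
        exact mem_Iio.mpr (lt_nextC hclub.1 hαlam)
    · intro hsub
      exact lt_irrefl α (mem_Iio.mp (hsub (Or.inr rfl)))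
    · rw [union_singleton_inter (le_refl α)]
      exact inter_eq_left.mpr hu

lemma natLimitC_A4 (hmono : ∀ ξ ζ, ξ < ζ → ζ < γ → Q1Sle lam S (p ξ) (p ζ))
    (hγlim : Order.IsSuccLimit γ) (hclub : IsClubIn lam (limC γ p)) :
    ∀ ξ ∈ S, ξ ∉ limC γ p → ∀ α ∈ limC γ p ∩ Set.Iio ξ, ∀ u, u ⊆ Set.Iio α →
      ξ = sSup (natLimitC lam S γ p α u ∩ Set.Iio ξ) → ξ ∈ natLimitC lam S γ p α u := by
  intro ξ hξS hξq α hα u hu hsup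
  obtain ⟨hαq, hαξ⟩ := hα
  have hαξ' : α < ξ := mem_Iio.mp hαξ
  have hαlam : α < lam := limC_Iio hγlim.pos hαq
  by_cases hall : ∀ ζ < γ, u ∈ posPlusS S (p ζ).C (p ζ).c (p ζ).w α
  case neg =>
    exfalso
    rw [natLimitC_eq_else hαq hu hall] at hsup
    have hsub : (u ∪ {α}) ∩ Set.Iio ξ ⊆ Set.Iic α := by
      rintro x ⟨hx | hx, -⟩
      · exact mem_Iic.mpr (le_of_lt (mem_Iio.mp (hu hx)))
      · exact mem_Iic.mpr (le_of_eq (mem_singleton_iff.mp hx))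
    have h2 := sSup_le_of_subset_Iic hsub
    rw [← hsup] at h2
    exact absurd h2 (not_le.2 hαξ')
  case pos =>
    have hν := nextC_mem hclub.1 hαlam
    have hξν : ξ < nextC (limC γ p) α := by
      have hb : ξ ≤ nextC (limC γ p) α := by
        rw [hsup]
        apply sSup_le_of_subset_Iic
        rintro x ⟨hx1, -⟩
        exact mem_Iic.mpr (le_of_lt (mem_Iio.mp
          (natLimitC_subset hmono hγlim hclub hαq hu hall hx1)))
      exact lt_of_le_of_ne hb (fun h => hξq (h ▸ hν.1))
    obtain ⟨ζ₁, hζ₁, hξζ₁⟩ := exists_nextC_gt hmono hγlim hclub hαq hξν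
    obtain ⟨ζ₂, hζ₂, hξC₂⟩ : ∃ ζ₂ < γ, ξ ∉ (p ζ₂).C := by
      rw [mem_limC] at hξq
      push_neg at hξq
      exact hξq
    have hζγ : ζ₁ ⊔ ζ₂ < γ := max_lt hζ₁ hζ₂
    have hξζ : ξ < nextC (p (ζ₁ ⊔ ζ₂)).C α :=
      lt_of_lt_of_le hξζ₁ (nextC_mono (C_anti hmono le_sup_left hζγ)
        ⟨_, nextC_mem (p _).seq.1.1 hαlam⟩)
    have hξCζ : ξ ∉ (p (ζ₁ ⊔ ζ₂)).C := fun h => hξC₂ (C_anti hmono le_sup_right hζγ h)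
    have hinter := natLimitC_inter hmono hαq hu hall hζγ
    have hres := restrict₂ hinter (le_of_lt hξζ)
    rw [hres] at hsup
    have hmem := (p (ζ₁ ⊔ ζ₂)).seq.2.2.2 ξ hξS hξCζ α
      ⟨limC_subset hζγ hαq, hαξ⟩ u hu hsup
    rw [← hinter] at hmem
    exact hmem.1

lemma limW_SClosed (hmono : ∀ ξ ζ, ξ < ζ → ζ < γ → Q1Sle lam S (p ξ) (p ζ))
    (hγlim : Order.IsSuccLimit γ) (hlam : 0 < lam) (hclub : IsClubIn lam (limC γ p)) :
    SClosed S (limW γ p ∪ {sInf (limC γ p)}) := by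
  intro ξ hne hsup hξS
  have hqne : (limC γ p).Nonempty := unb_nonempty hclub.1 hlam
  have hmmem : sInf (limC γ p) ∈ limC γ p := csInf_mem hqne
  rcases lt_trichotomy ξ (sInf (limC γ p)) with hlt | heq | hgt
  case inr.inl => exact Or.inr (mem_singleton_iff.mpr heq)
  case inr.inr =>
    exfalso
    have hsub : (limW γ p ∪ {sInf (limC γ p)}) ∩ Set.Iio ξ ⊆ Set.Iic (sInf (limC γ p)) := by
      rintro x ⟨hx | hx, -⟩
      · exact mem_Iic.mpr (le_of_lt (mem_Iio.mp
          (limW_Iio hmono hlam hqne hx)))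
      · exact mem_Iic.mpr (le_of_eq (mem_singleton_iff.mp hx))
    have h2 := sSup_le_of_subset_Iic hsub
    rw [← hsup] at h2
    exact absurd h2 (not_le.2 hgt)
  case inl =>
    have hset : (limW γ p ∪ {sInf (limC γ p)}) ∩ Set.Iio ξ = limW γ p ∩ Set.Iio ξ :=
      union_singleton_inter (le_of_lt hlt)
    rw [hset] at hne hsup
    by_cases hex : ∃ ζ < γ, ξ < sInf (p ζ).C
    · obtain ⟨ζ₀, hζ₀, hξζ⟩ := hex
      have hres := restrict₂ (limW_inter hmono hlam hζ₀) (le_of_lt hξζ)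
      rw [hres] at hne hsup
      have hset2 : ((p ζ₀).w ∪ {sInf (p ζ₀).C}) ∩ Set.Iio ξ = (p ζ₀).w ∩ Set.Iio ξ :=
        union_singleton_inter (le_of_lt hξζ)
      have hmem := (p ζ₀).w_cl ξ (by rw [hset2]; exact hne) (by rw [hset2]; exact hsup) hξS
      rcases hmem with hmem | hmem
      · exact Or.inl (mem_limW.mpr ⟨ζ₀, hζ₀, hmem⟩)
      · exact absurd (mem_singleton_iff.mp hmem) (ne_of_lt hξζ)
    · push_neg at hex
      exfalso
      have hξlam : ξ < lam := lt_trans hlt (hclub.1.1 hmmem)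
      have hξpos : 0 < ξ := by
        obtain ⟨x, -, hx2⟩ := hne
        exact lt_of_le_of_lt (zero_le (a := x)) (mem_Iio.mp hx2)
      by_cases hattain : ∃ ζ < γ, sInf (p ζ).C = ξ
      · obtain ⟨ζ, hζ, heqζ⟩ := hattain
        have hξmem : ξ ∈ limC γ p := by
          rw [mem_limC]
          intro η' hη'
          rcases le_total η' ζ with hle | hle
          · exact C_anti hmono hle hζ (heqζ ▸ csInf_mem (unb_nonempty (p ζ).seq.1.1 hlam))
          · have h1 : ξ ≤ sInf (p η').C := heqζ ▸ sInf_C_mono hmono hlam hle hη'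
            have h2 : sInf (p η').C = ξ := le_antisymm (hex η' hη') h1
            exact h2 ▸ csInf_mem (unb_nonempty (p η').seq.1.1 hlam)
        exact absurd (csInf_le (OrderBot.bddBelow _) hξmem) (not_le.2 hlt)
      · push_neg at hattain
        have hstrict : ∀ ζ < γ, sInf (p ζ).C < ξ :=
          fun ζ hζ => lt_of_le_of_ne (hex ζ hζ) (hattain ζ hζ)
        have hξmem : ξ ∈ limC γ p := by
          rw [mem_limC]
          intro η hη
          apply club_mem_of_cofinal (p η).seq.1 hξlam hξpos
          intro y hy
          obtain ⟨x, ⟨hxw, hxξ⟩, hyx⟩ : ∃ x ∈ limW γ p ∩ Set.Iio ξ, y < x := by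
            by_contra hcon
            push_neg at hcon
            have h2 : sSup (limW γ p ∩ Set.Iio ξ) ≤ y := csSup_le hne hcon
            rw [← hsup] at h2
            exact absurd h2 (not_le.2 hy)
          obtain ⟨ζ, hζ, hxζ⟩ := mem_limW.mp hxw
          have hζ'γ : ζ ⊔ η < γ := max_lt hζ hη
          have hxw' : x ∈ (p (ζ ⊔ η)).w := w_mono hmono hlam le_sup_left hζ'γ hxζ
          exact ⟨sInf (p (ζ ⊔ η)).C,
            C_anti hmono le_sup_right hζ'γ (csInf_mem (unb_nonempty (p _).seq.1.1 hlam)),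
            lt_trans hyx ((p _).w_sub hxw'), hstrict _ hζ'γ⟩
        exact absurd (csInf_le (OrderBot.bddBelow _) hξmem) (not_le.2 hlt)

end Seq5
end Q1SAux
namespace Q1SAux
open Set

section Seq6

variable {lam : Ordinal} {S : Set Ordinal} {γ : Ordinal} {p : Ordinal → Q1S lam S}

lemma clause3 (hmono : ∀ ξ ζ, ξ < ζ → ζ < γ → Q1Sle lam S (p ξ) (p ζ))
    (hγlim : Order.IsSuccLimit γ) (hlam : 0 < lam) (hclub : IsClubIn lam (limC γ p))
    {η α₀ : Ordinal} {u : Set Ordinal} (hη : η < γ) (hα₀ : α₀ ∈ limC γ p)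
    (hu : u ∈ posPlusS S (limC γ p) (natLimitC lam S γ p) (limW γ p) α₀) :
    natLimitC lam S γ p α₀ u ∈ posS S (p η).C (p η).c u (nextC (limC γ p) α₀) := by
  have hall : ∀ ζ < γ, u ∈ posPlusS S (p ζ).C (p ζ).c (p ζ).w α₀ :=
    fun ζ hζ => main_transfer hmono hγlim hlam hclub α₀ hα₀ u hu ζ hζ
  have hα₀lam : α₀ < lam := limC_Iio hγlim.pos hα₀
  have huIio : u ⊆ Set.Iio α₀ := hu.1.1
  have hCη : IsClubIn lam (p η).C := (p η).seq.1
  have hν := nextC_mem hclub.1 hα₀lam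
  have hself : natLimitC lam S γ p α₀ u ∩ Set.Iio α₀ = u :=
    natLimitC_inter_self hγlim.pos hα₀ huIio hall
  have husub : u ⊆ natLimitC lam S γ p α₀ u := by
    intro x hx
    rw [← hself] at hx
    exact hx.1
  -- per-ζ evaluation plus choice of a large enough index
  have hkey : ∀ x < nextC (limC γ p) α₀, ∃ ζ, η < ζ ∧ ζ < γ ∧
      x < nextC (p ζ).C α₀ ∧
      natLimitC lam S γ p α₀ u ∩ Set.Iio (nextC (p ζ).C α₀) = (p ζ).c α₀ u := by
    intro x hx
    obtain ⟨ζ₁, hζ₁, hxζ₁⟩ := exists_nextC_gt hmono hγlim hclub hα₀ hx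
    have hζγ : ζ₁ ⊔ Order.succ η < γ := max_lt hζ₁ (hγlim.succ_lt hη)
    have hηζ : η < ζ₁ ⊔ Order.succ η := lt_of_lt_of_le (Order.lt_succ η) le_sup_right
    refine ⟨ζ₁ ⊔ Order.succ η, hηζ, hζγ, ?_, natLimitC_inter hmono hα₀ huIio hall hζγ⟩
    exact lt_of_lt_of_le hxζ₁ (nextC_mono (C_anti hmono le_sup_left hζγ)
      ⟨_, nextC_mem (p _).seq.1.1 hα₀lam⟩)
  have hstep : ∀ ζ, η < ζ → ζ < γ →
      (p ζ).c α₀ u ∈ posS S (p η).C (p η).c u (nextC (p ζ).C α₀) :=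
    fun ζ h1 h2 => (hmono η ζ h1 h2).2.2 α₀ (limC_subset h2 hα₀)
      ⟨_, nextC_mem (p ζ).seq.1.1 hα₀lam⟩ u (hall ζ h2)
  -- first element of `(p η).C` above `u`
  have hAne : ({a | a ∈ (p η).C ∧ u ⊆ Set.Iio a}).Nonempty :=
    ⟨α₀, limC_subset hη hα₀, huIio⟩
  have hfmem : firstAbove (p η).C u ∈ (p η).C ∧ u ⊆ Set.Iio (firstAbove (p η).C u) :=
    csInf_mem hAne
  have hfle : firstAbove (p η).C u ≤ α₀ :=
    csInf_le (OrderBot.bddBelow _) ⟨limC_subset hη hα₀, huIio⟩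
  refine ⟨⟨⟨natLimitC_subset hmono hγlim hclub hα₀ huIio hall, ?_, ?_, ?_⟩, ?_⟩, ?_⟩
  · -- (ii)
    calc natLimitC lam S γ p α₀ u ∩ Set.Iio (firstAbove (p η).C u)
        = u ∩ Set.Iio (firstAbove (p η).C u) := restrict₂ hself hfle
      _ = u := inter_eq_left.mpr hfmem.2
  · -- (iii)
    intro β hβ huβ hβne hβle
    have hβlam : β < lam := hCη.1.1 hβ
    rcases lt_or_ge β α₀ with hβα₀ | hβα₀
    · right
      have hle' : nextC (p η).C β ≤ α₀ := nextC_le (limC_subset hη hα₀) hβα₀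
      have h1 : natLimitC lam S γ p α₀ u ∩ Set.Iio β = u := by
        rw [restrict₂ hself (le_of_lt hβα₀)]
        exact inter_eq_left.mpr huβ
      have h2 : natLimitC lam S γ p α₀ u ∩ Set.Iio (nextC (p η).C β) = u := by
        rw [restrict₂ hself hle']
        exact inter_eq_left.mpr (fun x hx => mem_Iio.mpr
          (lt_of_lt_of_le (mem_Iio.mp (huβ hx)) (le_of_lt (lt_nextC hCη.1 hβlam))))
      rw [h1, h2]
    · have hβν : β < nextC (limC γ p) α₀ :=
        lt_of_lt_of_le (lt_nextC hCη.1 hβlam) hβle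
      obtain ⟨ζ, hηζ, hζγ, hβζ, hXeq⟩ := hkey β hβν
      have hnle : nextC (p η).C β ≤ nextC (p ζ).C α₀ :=
        nextC_le (C_anti hmono hηζ.le hζγ (nextC_mem (p ζ).seq.1.1 hα₀lam).1) hβζ
      have hd := (hstep ζ hηζ hζγ).1.1.2.2.1 β hβ huβ hβne hnle
      rw [restrict₂ hXeq (le_of_lt hβζ), restrict₂ hXeq hnle]
      exact hd
  · -- (iv)
    intro α' hsupu hα'C hne1 hlim hne2 hle
    have hα'lam : α' < lam := by
      obtain ⟨z, hz1, hz2⟩ := hne2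
      exact lt_trans hz2 (hCη.1.1 hz1)
    rcases lt_trichotomy α' α₀ with hα'α₀ | rfl | hα'α₀
    · have hle' : nextC (p η).C α' ≤ α₀ := nextC_le (limC_subset hη hα₀) hα'α₀
      have hwsub : (p η).w ⊆ u := by
        intro x hx
        rw [← (hall η hη).1.2.1] at hx
        exact hx.1
      have hsupw : sSup (p η).w < α' := by
        apply lt_of_le_of_lt _ hsupu
        rcases (p η).w.eq_empty_or_nonempty with hemp | hnemp
        · rw [hemp, csSup_empty]; exact bot_le
        · exact csSup_le_csSup (bddAbove_of_subset_Iio (lam := α₀) huIio) hnemp hwsub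
      have hd := (hall η hη).1.2.2.2 α' hsupw hα'C hne1 hlim hne2 hle'
      rw [restrict₂ hself hle', restrict₂ hself (le_of_lt hα'α₀)]
      exact hd
    · exact absurd (limC_subset hη hα₀) hα'C
    · have hα'ν : α' < nextC (limC γ p) α₀ :=
        lt_of_lt_of_le (lt_nextC hCη.1 hα'lam) hle
      obtain ⟨ζ, hηζ, hζγ, hα'ζ, hXeq⟩ := hkey α' hα'ν
      have hnle : nextC (p η).C α' ≤ nextC (p ζ).C α₀ :=
        nextC_le (C_anti hmono hηζ.le hζγ (nextC_mem (p ζ).seq.1.1 hα₀lam).1) hα'ζ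
      have hd := (hstep ζ hηζ hζγ).1.1.2.2.2 α' hsupu hα'C hne1 hlim hne2 hnle
      rw [restrict₂ hXeq hnle, restrict₂ hXeq (le_of_lt hα'ζ)]
      exact hd
  · -- the `pos` clause
    intro hf1 hf2
    obtain ⟨ζ, hηζ, hζγ, hαζ, hXeq⟩ := hkey α₀ hν.2
    have hnextfle : nextC (p η).C (firstAbove (p η).C u) ≤ nextC (p ζ).C α₀ := by
      rcases eq_or_lt_of_le hfle with heq | hflt
      · rw [heq]
        exact nextC_mono (C_anti hmono hηζ.le hζγ) ⟨_, nextC_mem (p ζ).seq.1.1 hα₀lam⟩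
      · exact le_trans (nextC_le (limC_subset hη hα₀) hflt)
          (le_of_lt (lt_nextC (p ζ).seq.1.1 hα₀lam))
    have hfin := (hstep ζ hηζ hζγ).1.2
      (le_trans hfle (le_of_lt (lt_nextC (p ζ).seq.1.1 hα₀lam))) hnextfle
    rw [restrict₂ hXeq hnextfle]
    exact hfin
  · -- S-closedness
    intro ξ hne hsup hξS
    rcases lt_trichotomy ξ (nextC (limC γ p) α₀) with hlt | heq | hgt
    · have hset : (natLimitC lam S γ p α₀ u ∪ {nextC (limC γ p) α₀}) ∩ Set.Iio ξ
          = natLimitC lam S γ p α₀ u ∩ Set.Iio ξ := union_singleton_inter (le_of_lt hlt)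
      rw [hset] at hne hsup
      rcases le_or_gt ξ α₀ with hξα₀ | hξα₀
      · have hres := restrict₂ hself hξα₀
        have hset2 : (u ∪ {α₀}) ∩ Set.Iio ξ = u ∩ Set.Iio ξ := union_singleton_inter hξα₀
        rw [hres] at hne hsup
        have hmem := hu.2 ξ (by rw [hset2]; exact hne) (by rw [hset2]; exact hsup) hξS
        rcases hmem with hmem | hmem
        · exact Or.inl (husub hmem)
        · rw [mem_singleton_iff.mp hmem]
          exact Or.inl (mem_natLimitC_self hγlim.pos hα₀ huIio)
      · obtain ⟨ζ, hηζ, hζγ, hξζ, hXeq⟩ := hkey ξ hlt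
        have hres := restrict₂ hXeq (le_of_lt hξζ)
        have hset3 : ((p ζ).c α₀ u ∪ {nextC (p ζ).C α₀}) ∩ Set.Iio ξ
            = (p ζ).c α₀ u ∩ Set.Iio ξ := union_singleton_inter (le_of_lt hξζ)
        rw [hres] at hne hsup
        have hmem := (hstep ζ hηζ hζγ).2 ξ (by rw [hset3]; exact hne)
          (by rw [hset3]; exact hsup) hξS
        rcases hmem with hmem | hmem
        · refine Or.inl ?_
          rw [← hXeq] at hmem
          exact hmem.1
        · exact absurd (mem_singleton_iff.mp hmem) (ne_of_lt hξζ)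
    · exact Or.inr (mem_singleton_iff.mpr heq)
    · exfalso
      have hsub : (natLimitC lam S γ p α₀ u ∪ {nextC (limC γ p) α₀}) ∩ Set.Iio ξ
          ⊆ Set.Iic (nextC (limC γ p) α₀) := by
        rintro x ⟨hx | hx, -⟩
        · exact mem_Iic.mpr (le_of_lt (mem_Iio.mp
            (natLimitC_subset hmono hγlim hclub hα₀ huIio hall hx)))
        · exact mem_Iic.mpr (le_of_eq (mem_singleton_iff.mp hx))
      have h2 := sSup_le_of_subset_Iic hsub
      rw [← hsup] at h2
      exact absurd h2 (not_le.2 hgt)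

end Seq6
end Q1SAux
/-- `Q¹_S` is `(<λ)`-complete. -/
theorem Q1S_lt_lambda_complete (κ : Cardinal.{0}) (hκ : κ.IsInaccessible)
    (S : Set Ordinal)
    (hS : StatIn κ.ord S) (hS' : StatIn κ.ord (Set.Iio κ.ord \ S))
    (γ : Ordinal) (hγlim : Order.IsSuccLimit γ) (hγ : γ < κ.ord)
    (p : Ordinal → Q1S κ.ord S)
    (hmono : ∀ ξ ζ, ξ < ζ → ζ < γ → Q1Sle κ.ord S (p ξ) (p ζ)) :
    ∃ q : Q1S κ.ord S, ∀ ξ < γ, Q1Sle κ.ord S (p ξ) q := by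
  classical
  open Q1SAux Set in
  have hlam : (0 : Ordinal) < κ.ord := hκ.isRegular.ord_pos
  have hclub : IsClubIn κ.ord (limC γ p) := limC_club hκ hγ hγlim.pos
  have hqne : (limC γ p).Nonempty := unb_nonempty hclub.1 hlam
  have hmmem : sInf (limC γ p) ∈ limC γ p := csInf_mem hqne
  refine ⟨⟨limW γ p, limC γ p, natLimitC κ.ord S γ p, ?_, ?_, ?_, ?_⟩, ?_⟩
  · -- SClosedSeq
    exact ⟨hclub, ⟨hclub.1, fun α hα => natLimitC_extFun hmono hγlim hclub hα⟩,
      fun α hα u hu => mem_natLimitC_self hγlim.pos hα hu,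
      natLimitC_A4 hmono hγlim hclub⟩
  · -- w_sub
    exact limW_Iio hmono hlam hqne
  · -- w_cl
    exact limW_SClosed hmono hγlim hlam hclub
  · -- norm
    intro α u h
    rcases h with h | h
    · have h' : α ∉ ⋂ ξ ∈ Set.Iio γ, (p ξ).C := h
      rw [natLimitC, if_neg h']
    · by_cases hα : α ∈ ⋂ ξ ∈ Set.Iio γ, (p ξ).C
      · rw [natLimitC, if_pos hα, if_neg h]
      · rw [natLimitC, if_neg hα]
  · -- the order
    intro η hη
    have hqw : limW γ p ∈ posPlusS S (limC γ p) (natLimitC κ.ord S γ p) (limW γ p)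
        (sInf (limC γ p)) := by
      refine ⟨⟨limW_Iio hmono hlam hqne, ?_, ?_, ?_⟩, limW_SClosed hmono hγlim hlam hclub⟩
      · rw [firstAbove_limC hmono hlam hqne]
        exact inter_eq_left.mpr (limW_Iio hmono hlam hqne)
      · intro β hβ hwβ hβne hle
        exfalso
        have h1 : sInf (limC γ p) ≤ β := csInf_le (OrderBot.bddBelow _) hβ
        have h2 : β < nextC (limC γ p) β := lt_nextC hclub.1 (hclub.1.1 hβ)
        exact absurd (le_trans hle h1) (not_le.2 h2)
      · intro α' _ _ hne1 _ hne2 hle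
        exfalso
        obtain ⟨z, hz1, hz2⟩ := hne1
        have hz2' : z < α' := mem_Iio.mp hz2
        obtain ⟨y, hy1, hy2⟩ := hne2
        have hα'lam : α' < κ.ord := lt_trans hy2 (hclub.1.1 hy1)
        have h1 : sInf (limC γ p) ≤ z := csInf_le (OrderBot.bddBelow _) hz1
        have h2 : α' < nextC (limC γ p) α' := lt_nextC hclub.1 hα'lam
        exact absurd (le_trans hle h1) (not_le.2 (lt_trans hz2' h2))
    refine ⟨limC_subset hη, ?_, ?_⟩
    · exact main_transfer hmono hγlim hlam hclub (sInf (limC γ p)) hmmem _ hqw η hη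
    · intro α₀ hα₀ _ u hu
      exact clause3 hmono hγlim hlam hclub hη hα₀ hu
end

section
/- If p ∈ Q¹_S and α ∈ C^p, then the family {p↾_α u : u ∈ pos⁺_S(w^p, 𝔠^p, α)} is pre-dense above p in Q¹_S, i.e., every q ≥ p is compatible with some p↾_α u. -/
open Set

section HelperLemmas

open Set

lemma nextC_mem {C : Set Ordinal} {a : Ordinal} (h : (C ∩ Set.Ioi a).Nonempty) :
    nextC C a ∈ C ∧ a < nextC C a := csInf_mem h

lemma nextC_le {C : Set Ordinal} {a x : Ordinal} (hx : x ∈ C) (hax : a < x) : nextC C a ≤ x :=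
  csInf_le' ⟨hx, hax⟩

lemma nextC_rest {C : Set Ordinal} {b a : Ordinal} (h : b ≤ a) :
    nextC (C ∩ Set.Ici b) a = nextC C a := by
  unfold nextC
  congr 1
  ext x
  constructor
  · rintro ⟨⟨h1, -⟩, h2⟩; exact ⟨h1, h2⟩
  · rintro ⟨h1, h2⟩; exact ⟨⟨h1, le_trans h (le_of_lt h2)⟩, h2⟩

lemma firstAbove_eq {C w : Set Ordinal} {g : Ordinal} (hg : g ∈ C)
    (hsub : w ⊆ Set.Iio g) (hmin : ∀ x ∈ C, w ⊆ Set.Iio x → g ≤ x) : firstAbove C w = g :=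
  le_antisymm (csInf_le' ⟨hg, hsub⟩) (le_csInf ⟨g, hg, hsub⟩ fun x hx => hmin x hx.1 hx.2)

lemma inter_Iio_inter_Iio {X : Set Ordinal} {a b : Ordinal} (h : b ≤ a) :
    X ∩ Set.Iio a ∩ Set.Iio b = X ∩ Set.Iio b := by
  rw [inter_assoc, Iio_inter_Iio, min_eq_right h]

lemma club_nonempty {lam : Ordinal} {C : Set Ordinal} (h : IsClubIn lam C) (h0 : 0 < lam) :
    C.Nonempty := by
  obtain ⟨e, he, -⟩ := h.1.2 0 h0; exact ⟨e, he⟩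

lemma club_vacuous {lam : Ordinal} {C : Set Ordinal} (h : IsClubIn lam C) {x : Ordinal}
    (h1 : x ∉ C) (h2 : (C ∩ Set.Iio x).Nonempty) (h3 : x = sSup (C ∩ Set.Iio x))
    (h4 : (C ∩ Set.Ioi x).Nonempty) : False := by
  obtain ⟨e, heC, hex⟩ := h4
  exact h1 (h.2 x (lt_trans hex (h.1.1 heC)) h2 h3)

lemma club_rest {lam : Ordinal} {C : Set Ordinal} (h : IsClubIn lam C) {d : Ordinal}
    (hd : d ∈ C) : IsClubIn lam (C ∩ Set.Ici d) := by
  constructor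
  · constructor
    · exact fun x hx => h.1.1 hx.1
    · intro a ha
      obtain ⟨e, heC, he⟩ := h.1.2 (max a d) (max_lt ha (h.1.1 hd))
      exact ⟨e, ⟨heC, le_of_lt (lt_of_le_of_lt (le_max_right a d) he)⟩,
        lt_of_le_of_lt (le_max_left a d) he⟩
  · intro ξ hξ hne hsup
    obtain ⟨e, ⟨heC, hed⟩, heξ⟩ := hne
    have hsub : C ∩ Set.Ici d ∩ Set.Iio ξ ⊆ C ∩ Set.Iio ξ := fun x hx => ⟨hx.1.1, hx.2⟩
    have h1 : ξ ≤ sSup (C ∩ Set.Iio ξ) :=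
      hsup.le.trans (csSup_le_csSup ⟨ξ, fun x hx => le_of_lt hx.2⟩ ⟨e, ⟨heC, hed⟩, heξ⟩ hsub)
    have h2 : sSup (C ∩ Set.Iio ξ) ≤ ξ := csSup_le ⟨e, heC, heξ⟩ (fun x hx => le_of_lt hx.2)
    have hm : ξ ∈ C := h.2 ξ hξ ⟨e, heC, heξ⟩ (le_antisymm h1 h2)
    exact ⟨hm, Set.mem_Ici.mpr (le_trans (Set.mem_Ici.mp hed) (le_of_lt heξ))⟩

lemma exists_max_below {lam : Ordinal} {C : Set Ordinal} (h : IsClubIn lam C) {ξ : Ordinal}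
    (hξ : ξ < lam) (hne : (C ∩ Set.Iic ξ).Nonempty) :
    ∃ g ∈ C, g ≤ ξ ∧ ∀ e ∈ C, e ≤ ξ → e ≤ g := by
  by_cases hmem : ξ ∈ C
  · exact ⟨ξ, hmem, le_rfl, fun e _ he => he⟩
  · have hne' : (C ∩ Set.Iio ξ).Nonempty := by
      obtain ⟨e, heC, he⟩ := hne
      have he' : e ≤ ξ := he
      exact ⟨e, heC, lt_of_le_of_ne he' (fun h' : e = ξ => hmem (h' ▸ heC))⟩
    set g := sSup (C ∩ Set.Iio ξ) with hg
    have hbdd : BddAbove (C ∩ Set.Iio ξ) := ⟨ξ, fun x hx => le_of_lt hx.2⟩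
    have hgξ : g ≤ ξ := csSup_le hne' (fun x hx => le_of_lt hx.2)
    have hub : ∀ e ∈ C, e ≤ ξ → e ≤ g := by
      intro e heC he
      exact le_csSup hbdd ⟨heC, lt_of_le_of_ne he (fun h' : e = ξ => hmem (h' ▸ heC))⟩
    refine ⟨g, ?_, hgξ, hub⟩
    by_cases hgC : g ∈ C
    · exact hgC
    · exfalso
      have hset : C ∩ Set.Iio g = C ∩ Set.Iio ξ := by
        apply Set.eq_of_subset_of_subset
        · exact fun x hx => ⟨hx.1, lt_of_lt_of_le hx.2 hgξ⟩
        · intro x hx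
          refine ⟨hx.1, lt_of_le_of_ne (hub x hx.1 (le_of_lt hx.2)) ?_⟩
          rintro rfl; exact hgC hx.1
      exact hgC (h.2 g (lt_of_le_of_lt hgξ hξ) (hset ▸ hne') (by rw [hset]))

end HelperLemmas

section TowerLemmas

open Set

noncomputable def tower (C : Set Ordinal) (c : Ordinal → Set Ordinal → Set Ordinal)
    (w : Set Ordinal) (β : Ordinal) : Set Ordinal :=
  w ∪ ⋃ γ ∈ C ∩ Set.Iio β, c γ (tower C c w γ)
termination_by β
decreasing_by exact mem_of_mem_inter_right (by assumption)

theorem tower_def (C : Set Ordinal) (c : Ordinal → Set Ordinal → Set Ordinal)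
    (w : Set Ordinal) (β : Ordinal) :
    tower C c w β = w ∪ ⋃ γ ∈ C ∩ Set.Iio β, c γ (tower C c w γ) := by
  rw [tower]

lemma subset_tower (C : Set Ordinal) (c : Ordinal → Set Ordinal → Set Ordinal)
    (w : Set Ordinal) (β : Ordinal) : w ⊆ tower C c w β := by
  rw [tower_def]; exact Set.subset_union_left

lemma piece_subset_tower (C : Set Ordinal) (c : Ordinal → Set Ordinal → Set Ordinal)
    (w : Set Ordinal) {γ β : Ordinal} (h : γ ∈ C ∩ Set.Iio β) :
    c γ (tower C c w γ) ⊆ tower C c w β := by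
  rw [tower_def C c w β]
  intro x hx
  exact Or.inr (Set.mem_biUnion h hx)

lemma tower_mono (C : Set Ordinal) (c : Ordinal → Set Ordinal → Set Ordinal)
    (w : Set Ordinal) {β β' : Ordinal} (h : β ≤ β') : tower C c w β ⊆ tower C c w β' := by
  rw [tower_def C c w β]
  rintro x (hx | hx)
  · exact subset_tower C c w β' hx
  · simp only [Set.mem_iUnion] at hx
    obtain ⟨γ, hγ, hxγ⟩ := hx
    exact piece_subset_tower C c w ⟨hγ.1, lt_of_lt_of_le hγ.2 h⟩ hxγ

variable {C : Set Ordinal} {c : Ordinal → Set Ordinal → Set Ordinal} {w : Set Ordinal}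

lemma tower_subset_Iio (hext : ∀ γ ∈ C, ExtFun γ (nextC C γ) (c γ))
    (hw : w ⊆ Set.Iio (sInf C)) : ∀ β ∈ C, tower C c w β ⊆ Set.Iio β := by
  intro β
  induction β using Ordinal.induction with
  | h β IH =>
    intro hβ
    rw [tower_def]
    rintro x (hx | hx)
    · exact lt_of_lt_of_le (hw hx) (csInf_le' hβ)
    · simp only [Set.mem_iUnion] at hx
      obtain ⟨γ, ⟨hγC, hγβ⟩, hxγ⟩ := hx
      have hTγ : tower C c w γ ⊆ Set.Iio γ := IH γ hγβ hγC
      have hE := (hext γ hγC) (tower C c w γ) hTγ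
      exact lt_of_lt_of_le (hE.1 hxγ) (nextC_le hβ hγβ)

lemma tower_inter (hext : ∀ γ ∈ C, ExtFun γ (nextC C γ) (c γ))
    (hw : w ⊆ Set.Iio (sInf C)) :
    ∀ β, ∀ d ∈ C, d ≤ β → tower C c w β ∩ Set.Iio d = tower C c w d := by
  intro β
  induction β using Ordinal.induction with
  | h β IH =>
    intro d hdC hdβ
    apply Set.eq_of_subset_of_subset
    · rintro x ⟨hx, hxd⟩
      rw [tower_def] at hx
      rcases hx with hx | hx
      · exact subset_tower C c w d hx
      · simp only [Set.mem_iUnion] at hx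
        obtain ⟨γ, ⟨hγC, hγβ⟩, hxγ⟩ := hx
        by_cases hγd : γ < d
        · exact piece_subset_tower C c w ⟨hγC, hγd⟩ hxγ
        · push_neg at hγd
          have hTγ := tower_subset_Iio hext hw γ hγC
          have hE := (hext γ hγC) _ hTγ
          have hxT : x ∈ tower C c w γ := by
            rw [← hE.2.2]; exact ⟨hxγ, lt_of_lt_of_le hxd hγd⟩
          have hIH := IH γ hγβ d hdC hγd
          rw [← hIH]; exact ⟨hxT, hxd⟩
    · intro x hx
      exact ⟨tower_mono C c w hdβ hx, tower_subset_Iio hext hw d hdC hx⟩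

lemma tower_min : tower C c w (sInf C) = w := by
  rw [tower_def]
  have hempty : C ∩ Set.Iio (sInf C) = ∅ := by
    ext x
    simp only [Set.mem_inter_iff, Set.mem_Iio, Set.mem_empty_iff_false, iff_false, not_and,
      not_lt]
    exact fun hx => csInf_le' hx
  rw [hempty]
  simp

lemma tower_succ (hext : ∀ γ ∈ C, ExtFun γ (nextC C γ) (c γ))
    (hw : w ⊆ Set.Iio (sInf C)) {γ : Ordinal} (hγ : γ ∈ C)
    (hsucc : (C ∩ Set.Ioi γ).Nonempty) :
    tower C c w (nextC C γ) = c γ (tower C c w γ) := by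
  have hn := nextC_mem hsucc
  have hTγ := tower_subset_Iio hext hw γ hγ
  have hE := (hext γ hγ) _ hTγ
  have hTsubC : tower C c w γ ⊆ c γ (tower C c w γ) := by
    intro x hx; rw [← hE.2.2] at hx; exact hx.1
  apply Set.eq_of_subset_of_subset
  · intro x hx
    rw [tower_def] at hx
    rcases hx with hx | hx
    · exact hTsubC (subset_tower C c w γ hx)
    · simp only [Set.mem_iUnion] at hx
      obtain ⟨γ', ⟨hγ'C, hγ'n⟩, hxγ'⟩ := hx
      rcases lt_trichotomy γ' γ with hlt | rfl | hgt
      · exact hTsubC (piece_subset_tower C c w ⟨hγ'C, hlt⟩ hxγ')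
      · exact hxγ'
      · exact absurd (nextC_le hγ'C hgt) (not_le.mpr hγ'n)
  · exact piece_subset_tower C c w ⟨hγ, hn.2⟩

end TowerLemmas

section CondLemmas

open Set

variable {lam : Ordinal} {S : Set Ordinal}

lemma restC_eq {C : Set Ordinal} (c : Ordinal → Set Ordinal → Set Ordinal) {a : Ordinal}
    {u : Set Ordinal} (ha : a ∈ C) (hu : u ⊆ Set.Iio a) : restC C c a u = c a u := by
  simp [restC, ha, hu]

lemma sInf_rest {C : Set Ordinal} {d : Ordinal} (hd : d ∈ C) :
    sInf (C ∩ Set.Ici d) = d :=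
  le_antisymm (csInf_le' ⟨hd, Set.mem_Ici.mpr le_rfl⟩)
    (le_csInf ⟨d, hd, Set.mem_Ici.mpr le_rfl⟩ fun e he => he.2)

/-- The restriction `t↾_d x` of a condition, as a condition. -/
noncomputable def restrictCond (t : Q1S lam S) (d : Ordinal) (hd : d ∈ t.C)
    (x : Set Ordinal) (hx : x ⊆ Set.Iio d) (hxcl : SClosed S (x ∪ {d})) : Q1S lam S where
  w := x
  C := t.C ∩ Set.Ici d
  c := restC (t.C ∩ Set.Ici d) t.c
  seq := by
    have hclub := club_rest t.seq.1 hd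
    refine ⟨hclub, ⟨hclub.1, ?_⟩, ?_, ?_⟩
    · intro a ha
      rw [nextC_rest ha.2]
      intro u hu
      rw [restC_eq t.c ha hu]
      exact t.seq.2.1.2 a ha.1 u hu
    · intro a ha u hu
      rw [restC_eq t.c ha hu]
      exact t.seq.2.2.1 a ha.1 u hu
    · intro ξ hξS hξC a ha u hu hsup
      rw [restC_eq t.c ha.1 hu] at hsup ⊢
      have hξC' : ξ ∉ t.C := by
        intro hmem
        exact hξC ⟨hmem, Set.mem_Ici.mpr (le_trans (Set.mem_Ici.mp ha.1.2) (le_of_lt ha.2))⟩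
      exact t.seq.2.2.2 ξ hξS hξC' a ⟨ha.1.1, ha.2⟩ u hu hsup
  w_sub := by rw [sInf_rest hd]; exact hx
  w_cl := by rw [sInf_rest hd]; exact hxcl
  norm := by
    intro a u h
    rw [restC]
    rw [if_neg]
    rcases h with h | h
    · exact fun hc => h hc.1
    · exact fun hc => h hc.2

/-- The tower over a condition is a possibility at every point of its club. -/
lemma tower_posPlusS (t : Q1S lam S) (h0 : 0 < lam) :
    ∀ β ∈ t.C, tower t.C t.c t.w β ∈ posPlusS S t.C t.c t.w β := by
  have hclub : IsClubIn lam t.C := t.seq.1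
  have hext : ∀ γ ∈ t.C, ExtFun γ (nextC t.C γ) (t.c γ) := t.seq.2.1.2
  have hw : t.w ⊆ Set.Iio (sInf t.C) := t.w_sub
  have hne : t.C.Nonempty := club_nonempty hclub h0
  have hβ₀ : sInf t.C ∈ t.C := csInf_mem hne
  intro β hβ
  have hβ₀β : sInf t.C ≤ β := csInf_le' hβ
  have hTβ₀ : tower t.C t.c t.w β ∩ Set.Iio (sInf t.C) = t.w := by
    rw [tower_inter hext hw β (sInf t.C) hβ₀ hβ₀β, tower_min]
  constructor
  · -- posPlus
    refine ⟨tower_subset_Iio hext hw β hβ, ?_, ?_, ?_⟩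
    · -- clause 2
      have hfA : firstAbove t.C t.w = sInf t.C :=
        firstAbove_eq hβ₀ hw (fun e he _ => csInf_le' he)
      rw [hfA]; exact hTβ₀
    · -- clause 3
      intro a₁ ha₁ hwa₁ hsucc hnle
      have hn := nextC_mem hsucc
      have ha₁β : a₁ < β := lt_of_lt_of_le hn.2 hnle
      left
      rw [tower_inter hext hw β a₁ ha₁ (le_of_lt ha₁β),
        tower_inter hext hw β (nextC t.C a₁) hn.1 hnle,
        tower_succ hext hw ha₁ hsucc]
    · -- clause 4 : vacuous since the club is closed
      intro a₁ _ hnotC hne2 hsupeq hsucc _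
      exact absurd hsupeq (fun h => club_vacuous hclub hnotC hne2 h hsucc)
  · -- SClosed S (T β ∪ {β})
    intro ξ hne2 hsup hξS
    rcases lt_trichotomy ξ β with hlt | rfl | hgt
    · left
      have hsetξ : (tower t.C t.c t.w β ∪ {β}) ∩ Set.Iio ξ
          = tower t.C t.c t.w β ∩ Set.Iio ξ := by
        ext y
        simp only [Set.mem_inter_iff, Set.mem_union, Set.mem_singleton_iff, Set.mem_Iio]
        constructor
        · rintro ⟨hy | rfl, hyξ⟩
          · exact ⟨hy, hyξ⟩
          · exact absurd hyξ (not_lt.mpr (le_of_lt hlt))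
        · rintro ⟨hy, hyξ⟩; exact ⟨Or.inl hy, hyξ⟩
      rw [hsetξ] at hsup hne2
      rcases le_or_gt ξ (sInf t.C) with hξβ₀ | hβ₀ξ
      · -- below the minimum of the club : use t.w_cl
        have h1 : tower t.C t.c t.w β ∩ Set.Iio ξ = t.w ∩ Set.Iio ξ := by
          rw [← inter_Iio_inter_Iio hξβ₀, hTβ₀]
        have h2 : (t.w ∪ {sInf t.C}) ∩ Set.Iio ξ = t.w ∩ Set.Iio ξ := by
          ext y
          simp only [Set.mem_inter_iff, Set.mem_union, Set.mem_singleton_iff, Set.mem_Iio]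
          constructor
          · rintro ⟨hy | rfl, hyξ⟩
            · exact ⟨hy, hyξ⟩
            · exact absurd hyξ (not_lt.mpr hξβ₀)
          · rintro ⟨hy, hyξ⟩; exact ⟨Or.inl hy, hyξ⟩
        have := t.w_cl ξ (by rw [h2, ← h1]; exact hne2) (by rw [h2, ← h1]; exact hsup) hξS
        rcases this with hyw | hyβ₀
        · exact subset_tower _ _ _ β hyw
        · have hy : ξ = sInf t.C := hyβ₀
          rw [hy]
          exact piece_subset_tower _ _ _ ⟨hβ₀, hy ▸ hlt⟩
            (t.seq.2.2.1 (sInf t.C) hβ₀ _ (by rw [tower_min]; exact hw))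
      · by_cases hξD : ξ ∈ t.C
        · exact piece_subset_tower _ _ _ ⟨hξD, hlt⟩
            (t.seq.2.2.1 ξ hξD _ (tower_subset_Iio hext hw ξ hξD))
        · obtain ⟨g, hgD, hgξ, hgmax⟩ := exists_max_below hclub
            (lt_trans hlt (hclub.1.1 hβ)) ⟨sInf t.C, hβ₀, le_of_lt hβ₀ξ⟩
          have hgltξ : g < ξ := lt_of_le_of_ne hgξ (fun h => hξD (h ▸ hgD))
          have hsucc : (t.C ∩ Set.Ioi g).Nonempty := ⟨β, hβ, lt_of_le_of_lt hgξ hlt⟩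
          have hn := nextC_mem hsucc
          have hξn : ξ < nextC t.C g := by
            rcases lt_or_ge ξ (nextC t.C g) with h | h
            · exact h
            · exact absurd (hgmax _ hn.1 h) (not_le.mpr hn.2)
          have hnβ : nextC t.C g ≤ β := nextC_le hβ (lt_of_le_of_lt hgξ hlt)
          have hTn : tower t.C t.c t.w β ∩ Set.Iio (nextC t.C g)
              = t.c g (tower t.C t.c t.w g) := by
            rw [tower_inter hext hw β (nextC t.C g) hn.1 hnβ, tower_succ hext hw hgD hsucc]
          have hset2 : tower t.C t.c t.w β ∩ Set.Iio ξ
              = t.c g (tower t.C t.c t.w g) ∩ Set.Iio ξ := by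
            rw [← inter_Iio_inter_Iio (le_of_lt hξn), hTn]
          have hmem := t.seq.2.2.2 ξ hξS hξD g ⟨hgD, hgltξ⟩ _
            (tower_subset_Iio hext hw g hgD) (by rw [← hset2]; exact hsup)
          exact piece_subset_tower _ _ _ ⟨hgD, lt_trans hgltξ hlt⟩ hmem
    · right; rfl
    · exfalso
      have hbound : sSup ((tower t.C t.c t.w β ∪ {β}) ∩ Set.Iio ξ) ≤ β := by
        apply csSup_le hne2
        rintro y ⟨hy | rfl, -⟩
        · exact le_of_lt (tower_subset_Iio hext hw β hβ hy)
        · exact le_rfl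
      exact absurd (hsup ▸ hbound) (not_le.mpr hgt)

end CondLemmas

section MainLemmas

open Set

variable {lam : Ordinal} {S : Set Ordinal}

lemma union_singleton_inter {A : Set Ordinal} {b ξ : Ordinal} (h : ξ ≤ b) :
    (A ∪ {b}) ∩ Set.Iio ξ = A ∩ Set.Iio ξ := by
  ext y
  simp only [Set.mem_inter_iff, Set.mem_union, Set.mem_singleton_iff, Set.mem_Iio]
  constructor
  · rintro ⟨hy | rfl, hyξ⟩
    · exact ⟨hy, hyξ⟩
    · exact absurd hyξ (not_lt.mpr h)
  · rintro ⟨hy, hyξ⟩; exact ⟨Or.inl hy, hyξ⟩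

/-- Key consequence of `Q1Sle p r`: any possibility of `r` at a non-maximal point `a₀`
of `r.C` cannot be bounded below any point of `p.C` smaller than `a₀`. -/
lemma dagger (p r : Q1S lam S) (hDC : r.C ⊆ p.C)
    (hstep : ∀ α₀ ∈ r.C, (r.C ∩ Set.Ioi α₀).Nonempty →
      ∀ u ∈ posPlusS S r.C r.c r.w α₀, r.c α₀ u ∈ posS S p.C p.c u (nextC r.C α₀)) :
    ∀ a₀ ∈ r.C, (r.C ∩ Set.Ioi a₀).Nonempty →
      ∀ x ∈ posPlusS S r.C r.c r.w a₀, ∀ g ∈ p.C, x ⊆ Set.Iio g → a₀ ≤ g := by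
  intro a₀ ha₀ hsucc x hx g hg hsub
  by_contra hga₀
  push_neg at hga₀
  have hx1 : x ⊆ Set.Iio a₀ := hx.1.1
  have hAne : ({a ∈ p.C | x ⊆ Set.Iio a}).Nonempty := ⟨g, hg, hsub⟩
  have hfA : firstAbove p.C x ∈ {a ∈ p.C | x ⊆ Set.Iio a} := csInf_mem hAne
  have hfAg : firstAbove p.C x ≤ g := csInf_le' ⟨hg, hsub⟩
  have hfAa₀ : firstAbove p.C x < a₀ := lt_of_le_of_lt hfAg hga₀
  have hn' := nextC_mem hsucc
  have hsuccfA : (p.C ∩ Set.Ioi (firstAbove p.C x)).Nonempty := ⟨a₀, hDC ha₀, hfAa₀⟩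
  have hnfA := nextC_mem hsuccfA
  have hnfAa₀ : nextC p.C (firstAbove p.C x) ≤ a₀ := nextC_le (hDC ha₀) hfAa₀
  have hpos := hstep a₀ ha₀ hsucc x hx
  have heq := hpos.1.2 (le_of_lt (lt_trans hfAa₀ hn'.2))
    (le_trans hnfAa₀ (le_of_lt hn'.2))
  have hE := r.seq.2.1.2 a₀ ha₀ x hx1
  have hfAmem : firstAbove p.C x ∈ p.c (firstAbove p.C x) x :=
    p.seq.2.2.1 (firstAbove p.C x) hfA.1 x hfA.2
  rw [← heq] at hfAmem
  have hmem2 : firstAbove p.C x ∈ r.c a₀ x ∩ Set.Iio a₀ := ⟨hfAmem.1, hfAa₀⟩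
  rw [hE.2.2] at hmem2
  have hlt : firstAbove p.C x < firstAbove p.C x := hfA.2 hmem2
  exact lt_irrefl _ hlt

/-- Reflexivity-type step: `r.c a₀ x` is a legitimate `posS` over `r` itself. -/
lemma rrefl (p r : Q1S lam S) (hDC : r.C ⊆ p.C)
    (hstep : ∀ α₀ ∈ r.C, (r.C ∩ Set.Ioi α₀).Nonempty →
      ∀ u ∈ posPlusS S r.C r.c r.w α₀, r.c α₀ u ∈ posS S p.C p.c u (nextC r.C α₀)) :
    ∀ a₀ ∈ r.C, (r.C ∩ Set.Ioi a₀).Nonempty → ∀ x ∈ posPlusS S r.C r.c r.w a₀,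
      r.c a₀ x ∈ posS S r.C r.c x (nextC r.C a₀) := by
  intro a₀ ha₀ hsucc x hx
  have hx1 : x ⊆ Set.Iio a₀ := hx.1.1
  have hn' := nextC_mem hsucc
  have hE := r.seq.2.1.2 a₀ ha₀ x hx1
  have hVfull : r.c a₀ x ∩ Set.Iio (nextC r.C a₀) = r.c a₀ x := inter_eq_left.mpr hE.1
  have hfa : firstAbove r.C x = a₀ :=
    firstAbove_eq ha₀ hx1 (fun e he hs => dagger p r hDC hstep a₀ ha₀ hsucc x hx e (hDC he) hs)
  refine ⟨⟨⟨hE.1, ?_, ?_, ?_⟩, ?_⟩, ?_⟩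
  · rw [hfa]; exact hE.2.2
  · -- clause 3
    intro a₁ ha₁ hxa₁ hsucc1 hnle1
    have ha₀a₁ : a₀ ≤ a₁ := dagger p r hDC hstep a₀ ha₀ hsucc x hx a₁ (hDC ha₁) hxa₁
    rcases eq_or_lt_of_le ha₀a₁ with rfl | hlt
    · left
      rw [hE.2.2, hVfull]
    · exfalso
      have h1 : nextC r.C a₀ ≤ a₁ := nextC_le ha₁ hlt
      have h2 := (nextC_mem hsucc1).2
      exact absurd (le_trans hnle1 h1) (not_le.mpr h2)
  · -- clause 4
    intro a₁ _ hnotC hne2 hsupeq hsucc2 _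
    exact absurd hsupeq (fun h => club_vacuous r.seq.1 hnotC hne2 h hsucc2)
  · -- pos condition
    rw [hfa]
    intro _ _
    exact hVfull
  · -- SClosed
    intro ξ hne hsup hξS
    rcases lt_trichotomy ξ (nextC r.C a₀) with hlt | rfl | hgt
    · left
      rw [union_singleton_inter (le_of_lt hlt)] at hne hsup
      rcases lt_trichotomy ξ a₀ with h1 | rfl | h3
      · have hVx : r.c a₀ x ∩ Set.Iio ξ = x ∩ Set.Iio ξ := by
          rw [← inter_Iio_inter_Iio (le_of_lt h1), hE.2.2]
        rw [hVx] at hne hsup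
        have := hx.2 ξ (by rw [union_singleton_inter (le_of_lt h1)]; exact hne)
          (by rw [union_singleton_inter (le_of_lt h1)]; exact hsup) hξS
        rcases this with h | h
        · rw [← hE.2.2] at h; exact h.1
        · exact absurd (h : ξ = a₀) (ne_of_lt h1)
      · exact r.seq.2.2.1 ξ ha₀ x hx1
      · have hξD : ξ ∉ r.C := by
          intro hmem
          exact absurd (nextC_le hmem h3) (not_le.mpr hlt)
        exact r.seq.2.2.2 ξ hξS hξD a₀ ⟨ha₀, h3⟩ x hx1 hsup
    · right; rfl
    · exfalso
      have hbound : sSup ((r.c a₀ x ∪ {nextC r.C a₀}) ∩ Set.Iio ξ) ≤ nextC r.C a₀ := by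
        apply csSup_le hne
        rintro y ⟨hy | rfl, -⟩
        · exact le_of_lt (hE.1 hy)
        · exact le_rfl
      exact absurd (hsup ▸ hbound) (not_le.mpr hgt)

/-- Step lemma transferred to the restricted condition `p↾_α`. -/
lemma qclause (p r : Q1S lam S) (hDC : r.C ⊆ p.C)
    (hstep : ∀ α₀ ∈ r.C, (r.C ∩ Set.Ioi α₀).Nonempty →
      ∀ u ∈ posPlusS S r.C r.c r.w α₀, r.c α₀ u ∈ posS S p.C p.c u (nextC r.C α₀))
    {α : Ordinal} (hα : α ∈ p.C) :
    ∀ a₀ ∈ r.C, α ≤ a₀ → (r.C ∩ Set.Ioi a₀).Nonempty →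
      ∀ x ∈ posPlusS S r.C r.c r.w a₀,
        r.c a₀ x ∈ posS S (p.C ∩ Set.Ici α) (restC (p.C ∩ Set.Ici α) p.c) x
          (nextC r.C a₀) := by
  intro a₀ ha₀ hαa₀ hsucc x hx
  have hx1 : x ⊆ Set.Iio a₀ := hx.1.1
  have hn' := nextC_mem hsucc
  have hE := r.seq.2.1.2 a₀ ha₀ x hx1
  have hps := hstep a₀ ha₀ hsucc x hx
  have hfaC : firstAbove p.C x = a₀ :=
    firstAbove_eq (hDC ha₀) hx1
      (fun e he hs => dagger p r hDC hstep a₀ ha₀ hsucc x hx e he hs)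
  have hfaq : firstAbove (p.C ∩ Set.Ici α) x = a₀ :=
    firstAbove_eq ⟨hDC ha₀, hαa₀⟩ hx1
      (fun e he hs => dagger p r hDC hstep a₀ ha₀ hsucc x hx e he.1 hs)
  have hcond : nextC p.C a₀ ≤ nextC r.C a₀ →
      r.c a₀ x ∩ Set.Iio (nextC p.C a₀) = p.c a₀ x := by
    intro h
    have := hps.1.2 (by rw [hfaC]; exact le_of_lt hn'.2) (by rw [hfaC]; exact h)
    rw [hfaC] at this
    exact this
  simp only [posS, pos, posPlus, Set.mem_sep_iff, Set.mem_setOf_eq]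
  refine ⟨⟨⟨hps.1.1.1, ?_, ?_, ?_⟩, ?_⟩, hps.2⟩
  · rw [hfaq]; exact hE.2.2
  · -- clause 3
    intro a₁ ha₁ hxa₁ hsucc1 hnle1
    rw [nextC_rest ha₁.2] at hnle1 ⊢
    have ha₀a₁ : a₀ ≤ a₁ :=
      dagger p r hDC hstep a₀ ha₀ hsucc x hx a₁ ha₁.1 hxa₁
    have hsucc1' : (p.C ∩ Set.Ioi a₁).Nonempty := by
      obtain ⟨e, he, hei⟩ := hsucc1; exact ⟨e, he.1, hei⟩
    rcases eq_or_lt_of_le ha₀a₁ with rfl | hlt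
    · left
      rw [restC_eq p.c ha₁ (fun y hy => hy.2), hE.2.2]
      exact (hcond hnle1).symm
    · have hdis := hps.1.1.2.2.1 a₁ ha₁.1 hxa₁ hsucc1' hnle1
      rw [restC_eq p.c ha₁ (fun y hy => hy.2)]
      exact hdis
  · -- clause 4
    intro a₁ _ hnotC hne2 hsupeq hsucc2 _
    exact absurd hsupeq
      (fun h => club_vacuous (club_rest p.seq.1 hα) hnotC hne2 h hsucc2)
  · -- pos condition
    rw [hfaq, nextC_rest hαa₀, restC_eq p.c (show a₀ ∈ p.C ∩ Set.Ici α from ⟨hDC ha₀, hαa₀⟩) hx1]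
    intro _ h2
    exact hcond h2

end MainLemmas

section TransferLemmas

open Set

variable {lam : Ordinal} {S : Set Ordinal}

/-- Lifting possibilities of the restriction `r↾_β` to possibilities of `r`. -/
lemma lift (r : Q1S lam S) (h0 : 0 < lam) {β : Ordinal} (hβ : β ∈ r.C) :
    ∀ a₀ ∈ r.C ∩ Set.Ici β,
      ∀ x ∈ posPlusS S (r.C ∩ Set.Ici β) (restC (r.C ∩ Set.Ici β) r.c)
        (tower r.C r.c r.w β) a₀,
      x ∈ posPlusS S r.C r.c r.w a₀ := by
  have hextD := r.seq.2.1.2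
  have hwD := r.w_sub
  have hDne : r.C.Nonempty := club_nonempty r.seq.1 h0
  have hβ₀D : sInf r.C ∈ r.C := csInf_mem hDne
  have hβ₀β : sInf r.C ≤ β := csInf_le' hβ
  have hTsub : tower r.C r.c r.w β ⊆ Set.Iio β := tower_subset_Iio hextD hwD β hβ
  have hTβ₀ : tower r.C r.c r.w β ∩ Set.Iio (sInf r.C) = r.w := by
    rw [tower_inter hextD hwD β (sInf r.C) hβ₀D hβ₀β, tower_min]
  have htow := tower_posPlusS r h0 β hβ
  intro a₀ ha₀ x hx
  have hfa' : firstAbove (r.C ∩ Set.Ici β) (tower r.C r.c r.w β) = β :=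
    firstAbove_eq ⟨hβ, Set.mem_Ici.mpr le_rfl⟩ hTsub (fun e he _ => he.2)
  have hxβ : x ∩ Set.Iio β = tower r.C r.c r.w β := by
    have := hx.1.2.1
    rw [hfa'] at this
    exact this
  refine ⟨⟨hx.1.1, ?_, ?_, ?_⟩, hx.2⟩
  · -- clause 2
    have hfa0 : firstAbove r.C r.w = sInf r.C :=
      firstAbove_eq hβ₀D hwD (fun e he _ => csInf_le' he)
    rw [hfa0, ← inter_Iio_inter_Iio hβ₀β, hxβ]
    exact hTβ₀
  · -- clause 3
    intro a₁ ha₁ hwa₁ hsucc1 hnle1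
    rcases le_or_gt β a₁ with hβa₁ | hlt
    · have hsucc1' : ((r.C ∩ Set.Ici β) ∩ Set.Ioi a₁).Nonempty := by
        obtain ⟨e, he, hei⟩ := hsucc1
        exact ⟨e, ⟨he, le_trans hβa₁ (le_of_lt hei)⟩, hei⟩
      have hdis := hx.1.2.2.1 a₁ ⟨ha₁, hβa₁⟩
        (fun y hy => lt_of_lt_of_le (hTsub hy) hβa₁) hsucc1'
        (by rw [nextC_rest hβa₁]; exact hnle1)
      rw [nextC_rest hβa₁,
        restC_eq r.c (show a₁ ∈ r.C ∩ Set.Ici β from ⟨ha₁, hβa₁⟩)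
          (fun y hy => hy.2)] at hdis
      exact hdis
    · have hnβ : nextC r.C a₁ ≤ β := nextC_le hβ hlt
      have e1 : x ∩ Set.Iio a₁ = tower r.C r.c r.w β ∩ Set.Iio a₁ := by
        rw [← inter_Iio_inter_Iio (le_of_lt hlt), hxβ]
      have e2 : x ∩ Set.Iio (nextC r.C a₁)
          = tower r.C r.c r.w β ∩ Set.Iio (nextC r.C a₁) := by
        rw [← inter_Iio_inter_Iio hnβ, hxβ]
      have hdis := htow.1.2.2.1 a₁ ha₁ hwa₁ hsucc1 hnβ
      rw [e1, e2]
      exact hdis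
  · -- clause 4
    intro a₁ _ hnotC hne2 hsupeq hsucc2 _
    exact absurd hsupeq (fun h => club_vacuous r.seq.1 hnotC hne2 h hsucc2)

/-- The tower over `r` is coherent with the extension functions of `p`. -/
lemma transfer (p r : Q1S lam S) (h0 : 0 < lam) (hDC : r.C ⊆ p.C)
    (hvw : r.w ∈ posPlusS S p.C p.c p.w (sInf r.C))
    (hstep : ∀ α₀ ∈ r.C, (r.C ∩ Set.Ioi α₀).Nonempty →
      ∀ u ∈ posPlusS S r.C r.c r.w α₀, r.c α₀ u ∈ posS S p.C p.c u (nextC r.C α₀))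
    {β : Ordinal} (hβ : β ∈ r.C) :
    ∀ a₁ ∈ p.C, p.w ⊆ Set.Iio a₁ → (p.C ∩ Set.Ioi a₁).Nonempty → nextC p.C a₁ ≤ β →
      (p.c a₁ (tower r.C r.c r.w β ∩ Set.Iio a₁)
          = tower r.C r.c r.w β ∩ Set.Iio (nextC p.C a₁) ∨
        tower r.C r.c r.w β ∩ Set.Iio a₁
          = tower r.C r.c r.w β ∩ Set.Iio (nextC p.C a₁)) := by
  have hextD := r.seq.2.1.2
  have hwD := r.w_sub
  have hDne : r.C.Nonempty := club_nonempty r.seq.1 h0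
  have hβ₀D : sInf r.C ∈ r.C := csInf_mem hDne
  have hβ₀β : sInf r.C ≤ β := csInf_le' hβ
  have hTβ₀ : tower r.C r.c r.w β ∩ Set.Iio (sInf r.C) = r.w := by
    rw [tower_inter hextD hwD β (sInf r.C) hβ₀D hβ₀β, tower_min]
  intro a₁ ha₁ hwa₁ hsucc hnle
  have hnmem := nextC_mem hsucc
  rcases lt_or_ge a₁ (sInf r.C) with hlt | hge
  · -- below the minimum of r.C : use hvw
    have hnβ₀ : nextC p.C a₁ ≤ sInf r.C := nextC_le (hDC hβ₀D) hlt
    have e1 : tower r.C r.c r.w β ∩ Set.Iio a₁ = r.w ∩ Set.Iio a₁ := by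
      rw [← inter_Iio_inter_Iio (le_of_lt hlt), hTβ₀]
    have e2 : tower r.C r.c r.w β ∩ Set.Iio (nextC p.C a₁)
        = r.w ∩ Set.Iio (nextC p.C a₁) := by
      rw [← inter_Iio_inter_Iio hnβ₀, hTβ₀]
    have hdis := hvw.1.2.2.1 a₁ ha₁ hwa₁ hsucc hnβ₀
    rw [e1, e2]
    exact hdis
  · -- above : locate a₁ in an interval of r.C
    have ha₁β : a₁ < β := lt_of_lt_of_le hnmem.2 hnle
    have ha₁lam : a₁ < lam := p.seq.1.1.1 ha₁
    obtain ⟨g, hgD, hga₁, hgmax⟩ := exists_max_below r.seq.1 ha₁lam ⟨sInf r.C, hβ₀D, hge⟩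
    have hsuccg : (r.C ∩ Set.Ioi g).Nonempty := ⟨β, hβ, lt_of_le_of_lt hga₁ ha₁β⟩
    have hg₁ := nextC_mem hsuccg
    have ha₁g₁ : a₁ < nextC r.C g := by
      rcases lt_or_ge a₁ (nextC r.C g) with h | h
      · exact h
      · exact absurd (hgmax _ hg₁.1 h) (not_le.mpr hg₁.2)
    have hg₁β : nextC r.C g ≤ β := nextC_le hβ (lt_of_le_of_lt hga₁ ha₁β)
    have hng₁ : nextC p.C a₁ ≤ nextC r.C g := nextC_le (hDC hg₁.1) ha₁g₁
    have hTg₁ : tower r.C r.c r.w β ∩ Set.Iio (nextC r.C g) = r.c g (tower r.C r.c r.w g) := by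
      rw [tower_inter hextD hwD β (nextC r.C g) hg₁.1 hg₁β, tower_succ hextD hwD hgD hsuccg]
    have htowg := tower_posPlusS r h0 g hgD
    have hX := hstep g hgD hsuccg (tower r.C r.c r.w g) htowg
    have hTgsub : tower r.C r.c r.w g ⊆ Set.Iio g := tower_subset_Iio hextD hwD g hgD
    rcases eq_or_lt_of_le hga₁ with rfl | hglt
    · -- a₁ = g (renamed): use the pos condition of hX
      left
      have hfAg : firstAbove p.C (tower r.C r.c r.w g) = g :=
        firstAbove_eq (hDC hgD) hTgsub
          (fun e he hs => dagger p r hDC hstep g hgD hsuccg _ htowg e he hs)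
      have hcond := hX.1.2 (by rw [hfAg]; exact le_of_lt hg₁.2) (by rw [hfAg]; exact hng₁)
      rw [hfAg] at hcond
      rw [tower_inter hextD hwD β g hgD (le_of_lt (lt_of_lt_of_le hg₁.2 hg₁β)),
        ← inter_Iio_inter_Iio hng₁, hTg₁]
      exact hcond.symm
    · -- g < a₁ : use clause 3 of hX at a₁
      have hdis := hX.1.1.2.2.1 a₁ ha₁ (fun y hy => lt_trans (hTgsub hy) hglt) hsucc hng₁
      have e1 : r.c g (tower r.C r.c r.w g) ∩ Set.Iio a₁
          = tower r.C r.c r.w β ∩ Set.Iio a₁ := by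
        rw [← hTg₁, inter_Iio_inter_Iio (le_of_lt ha₁g₁)]
      have e2 : r.c g (tower r.C r.c r.w g) ∩ Set.Iio (nextC p.C a₁)
          = tower r.C r.c r.w β ∩ Set.Iio (nextC p.C a₁) := by
        rw [← hTg₁, inter_Iio_inter_Iio hng₁]
      rw [e1, e2] at hdis
      exact hdis

end TransferLemmas

/-- the family `{p↾_α u : u ∈ pos⁺_S(w^p, 𝔠^p, α)}` is pre-dense above `p`. -/
theorem Q1S_restrict_predense (κ : Cardinal.{0}) (hκ : κ.IsInaccessible) (S : Set Ordinal)
    (hS : StatIn κ.ord S) (hS' : StatIn κ.ord (Set.Iio κ.ord \ S))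
    (p : Q1S κ.ord S) (α : Ordinal) (hα : α ∈ p.C) :
    ∀ r : Q1S κ.ord S, Q1Sle κ.ord S p r →
      ∃ u ∈ posPlusS S p.C p.c p.w α, ∃ q : Q1S κ.ord S,
        IsRestrictedCond κ.ord S p α u q ∧
        ∃ s : Q1S κ.ord S, Q1Sle κ.ord S q s ∧ Q1Sle κ.ord S r s := by
  intro r hpr
  obtain ⟨hDC, hvw, hstep⟩ := hpr
  have h0 : 0 < κ.ord := by
    rcases hκ with ⟨h1, -, -⟩
    have hlt : (0 : Cardinal) < κ := lt_trans Cardinal.aleph0_pos h1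
    rw [← Cardinal.ord_zero, Cardinal.ord_lt_ord]
    exact hlt
  have hpclub : IsClubIn κ.ord p.C := p.seq.1
  have hrclub : IsClubIn κ.ord r.C := r.seq.1
  have hextD := r.seq.2.1.2
  have hwD := r.w_sub
  have hDne : r.C.Nonempty := club_nonempty hrclub h0
  have hβ₀D : sInf r.C ∈ r.C := csInf_mem hDne
  have hαlam : α < κ.ord := hpclub.1.1 hα
  obtain ⟨e₀, he₀D, he₀⟩ := hrclub.1.2 α hαlam
  have hβne : (r.C ∩ Set.Ici α).Nonempty := ⟨e₀, he₀D, le_of_lt he₀⟩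
  have hβmem : sInf (r.C ∩ Set.Ici α) ∈ r.C ∩ Set.Ici α := csInf_mem hβne
  set β := sInf (r.C ∩ Set.Ici α) with hβdef
  have hβD : β ∈ r.C := hβmem.1
  have hαβ : α ≤ β := hβmem.2
  have hβ₀β : sInf r.C ≤ β := csInf_le' hβD
  have htow := tower_posPlusS r h0 β hβD
  have hTsub : tower r.C r.c r.w β ⊆ Set.Iio β := tower_subset_Iio hextD hwD β hβD
  have hTβ₀ : tower r.C r.c r.w β ∩ Set.Iio (sInf r.C) = r.w := by
    rw [tower_inter hextD hwD β (sInf r.C) hβ₀D hβ₀β, tower_min]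
  -- the chosen possibility at α
  set u : Set Ordinal := tower r.C r.c r.w β ∩ Set.Iio α with hudef
  have husub : u ⊆ Set.Iio α := fun x hx => hx.2
  -- u ∪ {α} is S-closed
  have hucl : SClosed S (u ∪ {α}) := by
    intro ξ hne hsup hξS
    rcases lt_trichotomy ξ α with hlt | rfl | hgt
    · left
      have hs1 : (u ∪ {α}) ∩ Set.Iio ξ = tower r.C r.c r.w β ∩ Set.Iio ξ := by
        rw [hudef, union_singleton_inter (le_of_lt hlt),
          inter_Iio_inter_Iio (le_of_lt hlt)]
      have hs2 : (tower r.C r.c r.w β ∪ {β}) ∩ Set.Iio ξ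
          = tower r.C r.c r.w β ∩ Set.Iio ξ :=
        union_singleton_inter (le_of_lt (lt_of_lt_of_le hlt hαβ))
      have := htow.2 ξ (by rw [hs2, ← hs1]; exact hne) (by rw [hs2, ← hs1]; exact hsup) hξS
      rcases this with h | h
      · exact ⟨h, hlt⟩
      · exact absurd (h : ξ = β) (ne_of_lt (lt_of_lt_of_le hlt hαβ))
    · right; rfl
    · exfalso
      have hbound : sSup ((u ∪ {α}) ∩ Set.Iio ξ) ≤ α := by
        apply csSup_le hne
        rintro y ⟨hy | rfl, -⟩
        · exact le_of_lt hy.2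
        · exact le_rfl
      exact absurd (hsup ▸ hbound) (not_le.mpr hgt)
  -- u is a possibility for p at α
  have humem : u ∈ posPlusS S p.C p.c p.w α := by
    refine ⟨⟨husub, ?_, ?_, ?_⟩, hucl⟩
    · -- clause 2
      have hβ₀C : sInf r.C ∈ p.C := hDC hβ₀D
      have hμ1 : firstAbove p.C p.w ≤ sInf r.C :=
        csInf_le' ⟨hβ₀C, fun x hx => lt_of_lt_of_le (p.w_sub hx) (csInf_le' hβ₀C)⟩
      have hμα : firstAbove p.C p.w ≤ α :=
        csInf_le' ⟨hα, fun x hx => lt_of_lt_of_le (p.w_sub hx) (csInf_le' hα)⟩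
      rw [hudef, inter_Iio_inter_Iio hμα, ← inter_Iio_inter_Iio hμ1, hTβ₀]
      exact hvw.1.2.1
    · -- clause 3
      intro a₁ ha₁ hwa₁ hsucc hnle
      have ha₁α : a₁ < α := lt_of_lt_of_le (nextC_mem hsucc).2 hnle
      have hdis := transfer p r h0 hDC hvw hstep hβD a₁ ha₁ hwa₁ hsucc (le_trans hnle hαβ)
      have e1 : u ∩ Set.Iio a₁ = tower r.C r.c r.w β ∩ Set.Iio a₁ :=
        inter_Iio_inter_Iio (le_of_lt ha₁α)
      have e2 : u ∩ Set.Iio (nextC p.C a₁)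
          = tower r.C r.c r.w β ∩ Set.Iio (nextC p.C a₁) :=
        inter_Iio_inter_Iio hnle
      rw [e1, e2]
      exact hdis
    · -- clause 4
      intro a₁ _ hnotC hne2 hsupeq hsucc2 _
      exact absurd hsupeq (fun h => club_vacuous hpclub hnotC hne2 h hsucc2)
  refine ⟨u, humem, restrictCond p α hα u husub hucl, ⟨rfl, rfl, rfl⟩,
    restrictCond r β hβD (tower r.C r.c r.w β) hTsub htow.2, ?_, ?_⟩
  · -- Q1Sle q s
    refine ⟨fun x hx => ⟨hDC hx.1, le_trans hαβ hx.2⟩, ?_, ?_⟩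
    · -- clause 2
      show tower r.C r.c r.w β ∈ posPlusS S (p.C ∩ Set.Ici α)
        (restC (p.C ∩ Set.Ici α) p.c) u (sInf (r.C ∩ Set.Ici β))
      rw [sInf_rest hβD]
      refine ⟨⟨hTsub, ?_, ?_, ?_⟩, htow.2⟩
      · -- clause 2 : firstAbove (p.C ∩ Ici α) u = α
        have hfa : firstAbove (p.C ∩ Set.Ici α) u = α :=
          firstAbove_eq ⟨hα, Set.mem_Ici.mpr le_rfl⟩ husub (fun e he _ => he.2)
        rw [hfa]
      · -- clause 3
        intro a₁ ha₁ _ hsucc1 hnle1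
        rw [nextC_rest ha₁.2] at hnle1 ⊢
        have hwa₁ : p.w ⊆ Set.Iio a₁ :=
          fun x hx => lt_of_lt_of_le (p.w_sub hx) (csInf_le' ha₁.1)
        have hsucc1' : (p.C ∩ Set.Ioi a₁).Nonempty := by
          obtain ⟨e, he, hei⟩ := hsucc1; exact ⟨e, he.1, hei⟩
        have hdis := transfer p r h0 hDC hvw hstep hβD a₁ ha₁.1 hwa₁ hsucc1' hnle1
        rw [restC_eq p.c ha₁ (fun y hy => hy.2)]
        exact hdis
      · -- clause 4
        intro a₁ _ hnotC hne2 hsupeq hsucc2 _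
        exact absurd hsupeq
          (fun h => club_vacuous (club_rest hpclub hα) hnotC hne2 h hsucc2)
    · -- clause 3
      intro a₀ ha₀ hsucc0 x hx
      have ha₀' : a₀ ∈ r.C ∩ Set.Ici β := ha₀
      have hx1 : x ⊆ Set.Iio a₀ := hx.1.1
      show restC (r.C ∩ Set.Ici β) r.c a₀ x ∈ posS S (p.C ∩ Set.Ici α)
        (restC (p.C ∩ Set.Ici α) p.c) x (nextC (r.C ∩ Set.Ici β) a₀)
      rw [nextC_rest ha₀'.2, restC_eq r.c ha₀' hx1]
      have hsucc0' : (r.C ∩ Set.Ioi a₀).Nonempty := by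
        obtain ⟨e, he, hei⟩ := hsucc0; exact ⟨e, he.1, hei⟩
      exact qclause p r hDC hstep hα a₀ ha₀'.1 (le_trans hαβ ha₀'.2) hsucc0' x
        (lift r h0 hβD a₀ ha₀' x hx)
  · -- Q1Sle r s
    refine ⟨fun x hx => hx.1, ?_, ?_⟩
    · -- clause 2
      show tower r.C r.c r.w β ∈ posPlusS S r.C r.c r.w (sInf (r.C ∩ Set.Ici β))
      rw [sInf_rest hβD]
      exact htow
    · -- clause 3
      intro a₀ ha₀ hsucc0 x hx
      have ha₀' : a₀ ∈ r.C ∩ Set.Ici β := ha₀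
      have hx1 : x ⊆ Set.Iio a₀ := hx.1.1
      show restC (r.C ∩ Set.Ici β) r.c a₀ x ∈ posS S r.C r.c x (nextC (r.C ∩ Set.Ici β) a₀)
      rw [nextC_rest ha₀'.2, restC_eq r.c ha₀' hx1]
      have hsucc0' : (r.C ∩ Set.Ioi a₀).Nonempty := by
        obtain ⟨e, he, hei⟩ := hsucc0; exact ⟨e, he.1, hei⟩
      exact rrefl p r hDC hstep a₀ ha₀'.1 hsucc0' x (lift r h0 hβD a₀ ha₀' x hx)
end
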